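/- arXiv:1304.3523 — 6 statements merged into one kernel-verified Lean document; each statement's English description precedes it below -/
import Mathlib

section
/- Let A be a C*-algebra and a ∈ A. Then sup over tracial states τ of |τ(a)| equals the distance estimate via the center-valued trace on the finite summand of A**: namely ‖ctr(a)‖ = sup_{τ ∈ T(A)} |τ(a)|, where ctr is the center-valued trace of the finite summand A**_f of the bidual von Neumann algebra. -/
open scoped ComplexOrder

section Auxiliary

lemma state_star {Z : Type*} [CStarAlgebra Z] [PartialOrder Z] [StarOrderedRing Z]
    (ψ : Z →L[ℂ] ℂ) (h1 : ψ 1 = 1) (hpos : ∀ z : Z, 0 ≤ ψ (star z * z)) (y : Z) :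
    ψ (star y) = starRingEnd ℂ (ψ y) := by
  have hre : ∀ z : Z, (ψ (star z * z)).im = 0 := fun z =>
    ((Complex.nonneg_iff.mp (hpos z)).2).symm
  have e1 : star (1 + y) * (1 + y) = 1 + y + star y + star y * y := by
    rw [star_add, star_one]; noncomm_ring
  have e2 : star (1 + Complex.I • y) * (1 + Complex.I • y)
      = 1 + Complex.I • y - Complex.I • star y + star y * y := by
    rw [star_add, star_smul, star_one, Complex.star_def, Complex.conj_I]
    rw [add_mul, mul_add, mul_add, one_mul, mul_one, smul_mul_smul_comm]
    simp [Complex.I_mul_I]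
    abel
  have h1' := hre (1 + y); rw [e1] at h1'
  have h2' := hre (1 + Complex.I • y); rw [e2] at h2'
  have hyy := hre y
  simp only [map_add, map_sub, map_smul, Complex.add_im, Complex.sub_im, Complex.smul_im,
    Complex.mul_im, Complex.I_re, Complex.I_im, Complex.smul_re, Complex.mul_re,
    h1, Complex.one_im, smul_eq_mul] at h1' h2'
  apply Complex.ext <;>
  · simp only [Complex.conj_re, Complex.conj_im]
    nlinarith [h1', h2', hyy]

lemma state_nonneg {Z : Type*} [CStarAlgebra Z] [PartialOrder Z] [StarOrderedRing Z]
    (ψ : Z →L[ℂ] ℂ) (hpos : ∀ z : Z, 0 ≤ ψ (star z * z)) {w : Z} (hw : 0 ≤ w) :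
    0 ≤ ψ w := by
  rw [StarOrderedRing.nonneg_iff] at hw
  induction hw using AddSubmonoid.closure_induction with
  | mem x hx => obtain ⟨s, rfl⟩ := hx; exact hpos s
  | zero => simp
  | add x y _ _ hx hy => rw [map_add]; exact add_nonneg hx hy

lemma state_bound {Z : Type*} [CStarAlgebra Z] [PartialOrder Z] [StarOrderedRing Z]
    (ψ : Z →L[ℂ] ℂ) (h1 : ψ 1 = 1) (hpos : ∀ z : Z, 0 ≤ ψ (star z * z)) (y : Z) :
    ‖ψ y‖ ≤ ‖y‖ := by
  have hcs : ‖ψ y‖ ^ 2 ≤ (ψ (star y * y)).re := by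
    have h0 := hpos (y - (ψ y) • 1)
    have hstar := state_star ψ h1 hpos y
    have hexp : star (y - (ψ y) • 1) * (y - (ψ y) • 1)
        = star y * y - (ψ y) • star y - (starRingEnd ℂ (ψ y)) • y
          + (ψ y * starRingEnd ℂ (ψ y)) • 1 := by
      rw [star_sub, star_smul, Complex.star_def, star_one]
      simp only [sub_mul, mul_sub, smul_mul_assoc, mul_smul_comm, smul_smul,
        mul_one, one_mul, smul_sub, smul_add, smul_neg, neg_smul]
      abel
    rw [hexp] at h0
    simp only [map_add, map_sub, map_smul, h1, smul_eq_mul, mul_one, hstar] at h0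
    have h0' := (Complex.nonneg_iff.mp h0).1
    simp only [Complex.sub_re, Complex.add_re, Complex.mul_re, Complex.conj_re,
      Complex.conj_im] at h0'
    rw [Complex.sq_norm, Complex.normSq_apply]
    nlinarith [h0']
  have hle : (ψ (star y * y)).re ≤ ‖y‖ ^ 2 := by
    have hmono : ψ (star y * y) ≤ ψ (algebraMap ℝ Z (‖y‖ ^ 2)) := by
      have hdiff : 0 ≤ ψ (algebraMap ℝ Z (‖y‖ ^ 2) - star y * y) :=
        state_nonneg ψ hpos (sub_nonneg.mpr CStarAlgebra.star_mul_le_algebraMap_norm_sq)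
      rw [map_sub] at hdiff; exact sub_nonneg.mp hdiff
    have heq : ψ (algebraMap ℝ Z (‖y‖ ^ 2)) = ((‖y‖ ^ 2 : ℝ) : ℂ) := by
      rw [Algebra.algebraMap_eq_smul_one, ψ.map_smul_of_tower, h1]
      simp [Complex.real_smul]
    rw [heq] at hmono
    have := (Complex.le_def.mp hmono).1
    simpa [← Complex.ofReal_pow] using this
  have h2 : ‖ψ y‖ ^ 2 ≤ ‖y‖ ^ 2 := le_trans hcs hle
  nlinarith [h2, norm_nonneg (ψ y), norm_nonneg y,
    sq_nonneg (‖ψ y‖ + ‖y‖), sq_nonneg (‖ψ y‖ - ‖y‖)]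

noncomputable def charCLM {Z : Type*} [CommCStarAlgebra Z]
    (φ : WeakDual.characterSpace ℂ Z) : Z →L[ℂ] ℂ := φ.1

@[simp] lemma charCLM_apply {Z : Type*} [CommCStarAlgebra Z]
    (φ : WeakDual.characterSpace ℂ Z) (z : Z) : charCLM φ z = φ z := rfl

end Auxiliary

/-- A tracial state on a unital C*-algebra. -/
def IsTracialState {A : Type*} [CStarAlgebra A] (τ : A →L[ℂ] ℂ) : Prop :=
  τ 1 = 1 ∧ (∀ a : A, 0 ≤ τ (star a * a)) ∧ ∀ a b : A, τ (a * b) = τ (b * a)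

/-- A state on a unital C*-algebra. -/
def IsState {Z : Type*} [CStarAlgebra Z] (ψ : Z →L[ℂ] ℂ) : Prop :=
  ψ 1 = 1 ∧ ∀ z : Z, 0 ≤ ψ (star z * z)

/-- `‖ctr a‖ = sup_{τ ∈ T(A)} |τ a|`, where `ctr` is the center-valued
trace of the finite summand `A**_f` of the bidual von Neumann algebra.  The bidual is
encoded by its characteristic properties: `Φ = ctr ∘ π_f : A → Z` is a unital positive
map into the (commutative) center `Z := Z(A**_f)` such that every tracial state of `A`
factors through `Φ` via a state of `Z`, and conversely every state of `Z` pulls back to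
a tracial state of `A`. -/
theorem stmt4 {A Z : Type*} [CStarAlgebra A] [CommCStarAlgebra Z] [Nontrivial Z]
    [PartialOrder Z] [StarOrderedRing Z]
    (Φ : A →L[ℂ] Z) (hΦ1 : Φ 1 = 1) (hΦpos : ∀ a : A, 0 ≤ Φ (star a * a))
    (h_forward : ∀ τ : A →L[ℂ] ℂ, IsTracialState τ →
      ∃ ψ : Z →L[ℂ] ℂ, IsState ψ ∧ ∀ a : A, τ a = ψ (Φ a))
    (h_back : ∀ ψ : Z →L[ℂ] ℂ, IsState ψ → IsTracialState (ψ.comp Φ)) :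
    ∀ a : A, ‖Φ a‖ = ⨆ τ : {τ : A →L[ℂ] ℂ // IsTracialState τ}, ‖τ.1 a‖ := by
  intro a
  -- every character of `Z` is a state
  have hchar : ∀ φ : WeakDual.characterSpace ℂ Z, IsState (charCLM φ) := by
    refine fun φ => ⟨by simp, fun z => ?_⟩
    simp only [charCLM_apply, map_mul, map_star]
    exact star_mul_self_nonneg _
  -- every tracial state is dominated by `‖Φ a‖`
  have key : ∀ τ : {τ : A →L[ℂ] ℂ // IsTracialState τ}, ‖τ.1 a‖ ≤ ‖Φ a‖ := by
    rintro ⟨τ, hτ⟩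
    obtain ⟨ψ, ⟨hψ1, hψpos⟩, hfac⟩ := h_forward τ hτ
    rw [hfac]
    exact state_bound ψ hψ1 hψpos (Φ a)
  have hbdd : BddAbove (Set.range fun τ : {τ : A →L[ℂ] ℂ // IsTracialState τ} =>
      ‖τ.1 a‖) := ⟨‖Φ a‖, by rintro x ⟨τ, rfl⟩; exact key τ⟩
  obtain ⟨φ₀⟩ : Nonempty (WeakDual.characterSpace ℂ Z) := inferInstance
  have hne : Nonempty {τ : A →L[ℂ] ℂ // IsTracialState τ} :=
    ⟨⟨(charCLM φ₀).comp Φ, h_back _ (hchar φ₀)⟩⟩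
  refine le_antisymm ?_ (ciSup_le key)
  have hsup0 : (0:ℝ) ≤ ⨆ τ : {τ : A →L[ℂ] ℂ // IsTracialState τ}, ‖τ.1 a‖ :=
    le_ciSup_of_le hbdd hne.some (norm_nonneg _)
  rw [← (gelfandTransform_isometry Z).norm_map_of_map_zero (map_zero _) (Φ a)]
  rw [ContinuousMap.norm_le _ hsup0]
  intro φ
  have : (WeakDual.gelfandTransform ℂ Z (Φ a)) φ = (charCLM φ) (Φ a) := rfl
  rw [this]
  have hτφ : IsTracialState ((charCLM φ).comp Φ) := h_back _ (hchar φ)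
  calc ‖(charCLM φ) (Φ a)‖
      = ‖(⟨(charCLM φ).comp Φ, hτφ⟩ :
          {τ : A →L[ℂ] ℂ // IsTracialState τ}).1 a‖ := rfl
    _ ≤ _ := le_ciSup hbdd _
end

section
/- In the Cuntz algebra O_∞ with orthogonal isometries l_1, …, l_n (satisfying l_i* l_j = δ_{ij} 1), set S_i = l_i + l_i*. Then for any elements b_1, …, b_n of a C*-algebra A, the element Σ_i S_i ⊗ b_i of O_∞ ⊗ A satisfies ‖Σ_i S_i ⊗ b_i‖ ≤ ‖Σ b_i* b_i‖^{1/2} + ‖Σ b_i b_i*‖^{1/2} ≤ 2(Σ_i ‖b_i‖²)^{1/2}. -/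
lemma stmt5_aux {B A C : Type*} [CStarAlgebra B] [CStarAlgebra A] [CStarAlgebra C]
    (φ : B →⋆ₐ[ℂ] C) (ψ : A →⋆ₐ[ℂ] C)
    {n : ℕ} (l : Fin n → B)
    (hl : ∀ i j, star (l i) * l j = if i = j then 1 else 0)
    (b : Fin n → A) :
    ‖∑ i, φ (l i) * ψ (b i)‖ ≤ Real.sqrt ‖∑ i, star (b i) * b i‖ := by
  set x : C := ∑ i, φ (l i) * ψ (b i) with hx
  have hxx : star x * x = ψ (∑ i, star (b i) * b i) := by
    rw [hx, star_sum]
    simp only [star_mul, ← map_star]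
    rw [Finset.sum_mul_sum, map_sum, Finset.sum_comm]
    refine Finset.sum_congr rfl fun j _ => ?_
    rw [Finset.sum_eq_single j]
    · rw [mul_assoc, ← mul_assoc (φ (star (l j))), ← map_mul, hl, if_pos rfl,
        map_one, one_mul, ← map_mul]
    · intro i _ hij
      rw [mul_assoc, ← mul_assoc (φ (star (l i))), ← map_mul, hl, if_neg hij,
        map_zero, zero_mul, mul_zero]
    · simp
  rw [Real.le_sqrt (norm_nonneg _), sq, ← CStarRing.norm_star_mul_self (x := x), hxx]
  · exact NonUnitalStarAlgHom.norm_apply_le ψ _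
  · exact norm_nonneg _
/-- in `O_∞ ⊗ A` (encoded as a C*-algebra `C` containing commuting
isometric copies of `O_∞` and `A` via `φ` and `ψ`, as in the minimal tensor product),
with isometries `l i` satisfying `lᵢ* lⱼ = δᵢⱼ 1` and `Sᵢ = lᵢ + lᵢ*`, one has
`‖∑ Sᵢ ⊗ bᵢ‖ ≤ ‖∑ bᵢ* bᵢ‖^{1/2} + ‖∑ bᵢ bᵢ*‖^{1/2} ≤ 2 (∑ ‖bᵢ‖²)^{1/2}`. -/
theorem stmt5 {B A C : Type*} [CStarAlgebra B] [CStarAlgebra A] [CStarAlgebra C]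
    (φ : B →⋆ₐ[ℂ] C) (ψ : A →⋆ₐ[ℂ] C)
    (hcomm : ∀ (b : B) (a : A), φ b * ψ a = ψ a * φ b)
    (hφ_inj : Function.Injective φ) (hψ_inj : Function.Injective ψ)
    {n : ℕ} (l : Fin n → B)
    (hl : ∀ i j, star (l i) * l j = if i = j then 1 else 0)
    (b : Fin n → A) :
    ‖∑ i, φ (l i + star (l i)) * ψ (b i)‖ ≤
        Real.sqrt ‖∑ i, star (b i) * b i‖ + Real.sqrt ‖∑ i, b i * star (b i)‖ ∧
    Real.sqrt ‖∑ i, star (b i) * b i‖ + Real.sqrt ‖∑ i, b i * star (b i)‖ ≤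
        2 * Real.sqrt (∑ i, ‖b i‖ ^ 2) := by
  constructor
  · have h1 : ‖∑ i, φ (l i) * ψ (b i)‖ ≤ Real.sqrt ‖∑ i, star (b i) * b i‖ :=
      stmt5_aux φ ψ l hl b
    have h2 : ‖∑ i, φ (star (l i)) * ψ (b i)‖ ≤ Real.sqrt ‖∑ i, b i * star (b i)‖ := by
      have := stmt5_aux φ ψ l hl (fun i => star (b i))
      simp only [star_star] at this
      calc ‖∑ i, φ (star (l i)) * ψ (b i)‖
          = ‖star (∑ i, φ (star (l i)) * ψ (b i))‖ := (norm_star _).symm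
        _ = ‖∑ i, φ (l i) * ψ (star (b i))‖ := by
            congr 1
            rw [star_sum]
            refine Finset.sum_congr rfl fun i _ => ?_
            rw [star_mul, ← map_star, ← map_star, star_star, ← hcomm]
        _ ≤ _ := this
    calc ‖∑ i, φ (l i + star (l i)) * ψ (b i)‖
        = ‖(∑ i, φ (l i) * ψ (b i)) + ∑ i, φ (star (l i)) * ψ (b i)‖ := by
          rw [← Finset.sum_add_distrib]
          congr 1; refine Finset.sum_congr rfl fun i _ => ?_
          rw [map_add, add_mul]
      _ ≤ ‖∑ i, φ (l i) * ψ (b i)‖ + ‖∑ i, φ (star (l i)) * ψ (b i)‖ := norm_add_le _ _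
      _ ≤ _ := add_le_add h1 h2
  · have key : ∀ c : Fin n → A, Real.sqrt ‖∑ i, star (c i) * c i‖ ≤
        Real.sqrt (∑ i, ‖c i‖ ^ 2) := by
      intro c
      refine Real.sqrt_le_sqrt ?_
      calc ‖∑ i, star (c i) * c i‖ ≤ ∑ i, ‖star (c i) * c i‖ := norm_sum_le _ _
        _ = ∑ i, ‖c i‖ ^ 2 := by
            refine Finset.sum_congr rfl fun i _ => ?_
            rw [CStarRing.norm_star_mul_self, sq]
    have h1 := key b
    have h2 := key (fun i => star (b i))
    simp only [star_star, norm_star] at h2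
    linarith
end

section
/- Let S_i(r) = l_i(r) + l_i(r)*, for isometries l_i(r) with l_i(r)* l_j(s) = δ_{ij}δ_{rs}1, and let b_i, c_i be elements of a C*-algebra A with ‖b_i‖ = ‖c_i‖. Define b̃(r) = Σ_i S_i(r) ⊗ b_i and c̃(r) = Σ_j S_j(r) ⊗ c_j. Then (1/R) Σ_{r=1}^R ‖b̃(r)‖‖c̃(r)‖ ≤ 4 Σ_i ‖b_i‖‖c_i‖ and ‖1 ⊗ Σ_i [b_i, c_i] − (1/R) Σ_{r=1}^R [b̃(r), c̃(r)]‖ ≤ (6/√R) Σ_i ‖b_i‖‖c_i‖. -/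
open Finset

section Helpers

variable {B A C : Type*} [CStarAlgebra B] [CStarAlgebra A] [CStarAlgebra C]
    (φ : B →⋆ₐ[ℂ] C) (ψ : A →⋆ₐ[ℂ] C)
    (hcomm : ∀ (x : B) (a : A), φ x * ψ a = ψ a * φ x)
    {n R : ℕ} (l : Fin R → Fin n → B)
    (hl : ∀ r s i j, star (l r i) * l s j = if r = s ∧ i = j then 1 else 0)

include hcomm hl

omit hcomm hl in
lemma helperA {ι : Type*} [Fintype ι] [DecidableEq ι]
    (v w : ι → C) (hv : ∀ i j, star (v i) * v j = if i = j then 1 else 0) :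
    ‖∑ i, v i * w i‖ ^ 2 ≤ ∑ i, ‖w i‖ ^ 2 := by
  have key : star (∑ i, v i * w i) * ∑ i, v i * w i = ∑ i, star (w i) * w i := by
    rw [star_sum, Finset.sum_mul]
    have h1 : ∀ i ∈ Finset.univ (α := ι),
        star (v i * w i) * ∑ j, v j * w j = ∑ j, if i = j then star (w i) * w j else 0 := by
      intro i _
      rw [Finset.mul_sum]
      refine Finset.sum_congr rfl fun j _ => ?_
      rw [star_mul, mul_assoc, ← mul_assoc (star (v i)), hv]
      split <;> simp
    rw [Finset.sum_congr rfl h1]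
    simp
  have h2 : ‖∑ i, v i * w i‖ ^ 2 = ‖∑ i, star (w i) * w i‖ := by
    rw [← key, CStarRing.norm_star_mul_self, sq]
  rw [h2]
  calc ‖∑ i, star (w i) * w i‖ ≤ ∑ i, ‖star (w i) * w i‖ := norm_sum_le _ _
    _ = ∑ i, ‖w i‖ ^ 2 := by simp [CStarRing.norm_star_mul_self, sq]

-- orthonormality of the φ-images
omit hcomm in
lemma hvφ (r s : Fin R) (i j : Fin n) :
    star (φ (l r i)) * φ (l s j) = if r = s ∧ i = j then 1 else 0 := by
  rw [← map_star, ← map_mul, hl]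
  split <;> simp

omit hcomm in
lemma single_bound (r : Fin R) (a : Fin n → A) (σ : ℝ) (hσ : 0 ≤ σ)
    (ha : ∑ i, ‖a i‖ ^ 2 ≤ σ) :
    ‖∑ i, φ (l r i) * ψ (a i)‖ ≤ Real.sqrt σ := by
  have h := helperA (fun i => φ (l r i)) (fun i => ψ (a i)) (fun i j => by
    rw [hvφ φ l hl r r i j]
    by_cases h : i = j <;> simp [h])
  have h2 : ∑ i, ‖ψ (a i)‖ ^ 2 ≤ ∑ i, ‖a i‖ ^ 2 :=
    Finset.sum_le_sum fun i _ =>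
      pow_le_pow_left₀ (norm_nonneg _) (NonUnitalStarAlgHom.norm_apply_le ψ (a i)) 2
  have h3 : ‖∑ i, φ (l r i) * ψ (a i)‖ ^ 2 ≤ σ := le_trans h (le_trans h2 ha)
  calc ‖∑ i, φ (l r i) * ψ (a i)‖
      = Real.sqrt (‖∑ i, φ (l r i) * ψ (a i)‖ ^ 2) := (Real.sqrt_sq (norm_nonneg _)).symm
    _ ≤ Real.sqrt σ := Real.sqrt_le_sqrt h3

lemma plus_bound (r : Fin R) (a : Fin n → A) (σ : ℝ) (hσ : 0 ≤ σ)
    (ha : ∑ i, ‖a i‖ ^ 2 ≤ σ) :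
    ‖∑ i, φ (l r i + star (l r i)) * ψ (a i)‖ ≤ 2 * Real.sqrt σ := by
  have hsplit : ∑ i, φ (l r i + star (l r i)) * ψ (a i)
      = (∑ i, φ (l r i) * ψ (a i)) + ∑ i, φ (star (l r i)) * ψ (a i) := by
    simp [map_add, add_mul, Finset.sum_add_distrib]
  have h1 : ‖∑ i, φ (l r i) * ψ (a i)‖ ≤ Real.sqrt σ :=
    single_bound φ ψ l hl r a σ hσ ha
  have hstar : star (∑ i, φ (star (l r i)) * ψ (a i))
      = ∑ i, φ (l r i) * ψ (star (a i)) := by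
    rw [star_sum]
    refine Finset.sum_congr rfl fun i _ => ?_
    rw [star_mul, ← map_star ψ, ← map_star φ, star_star, ← hcomm]
  have h2 : ‖∑ i, φ (star (l r i)) * ψ (a i)‖ ≤ Real.sqrt σ := by
    rw [← norm_star, hstar]
    refine single_bound φ ψ l hl r _ σ hσ ?_
    simpa using ha
  calc ‖∑ i, φ (l r i + star (l r i)) * ψ (a i)‖
      ≤ ‖∑ i, φ (l r i) * ψ (a i)‖ + ‖∑ i, φ (star (l r i)) * ψ (a i)‖ := by
        rw [hsplit]; exact norm_add_le _ _
    _ ≤ Real.sqrt σ + Real.sqrt σ := add_le_add h1 h2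
    _ = 2 * Real.sqrt σ := by ring


omit hcomm hl in
lemma sqrt_bound (x : C) (σ : ℝ) (hσ : 0 ≤ σ) (h : ‖x‖ ^ 2 ≤ (R : ℝ) * σ ^ 2) :
    ‖x‖ ≤ Real.sqrt R * σ := by
  calc ‖x‖ = Real.sqrt (‖x‖ ^ 2) := (Real.sqrt_sq (norm_nonneg _)).symm
    _ ≤ Real.sqrt ((R : ℝ) * σ ^ 2) := Real.sqrt_le_sqrt h
    _ = Real.sqrt R * σ := by
        rw [Real.sqrt_mul (Nat.cast_nonneg R), Real.sqrt_sq hσ]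

omit hcomm hl in
lemma tripleA (v w : Fin R → Fin n → Fin n → C)
    (hv : ∀ r i j s i' j', star (v r i j) * v s i' j' =
      if r = s ∧ i = i' ∧ j = j' then 1 else 0)
    (σ : ℝ) (hσ : 0 ≤ σ) (hw : ∑ r, ∑ i, ∑ j, ‖w r i j‖ ^ 2 ≤ (R : ℝ) * σ ^ 2) :
    ‖∑ r, ∑ i, ∑ j, v r i j * w r i j‖ ≤ Real.sqrt R * σ := by
  have h1 : (∑ p : Fin R × Fin n × Fin n, v p.1 p.2.1 p.2.2 * w p.1 p.2.1 p.2.2)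
      = ∑ r, ∑ i, ∑ j, v r i j * w r i j := by
    simp only [Fintype.sum_prod_type]
  have h2 : (∑ p : Fin R × Fin n × Fin n, ‖w p.1 p.2.1 p.2.2‖ ^ 2)
      = ∑ r, ∑ i, ∑ j, ‖w r i j‖ ^ 2 := by
    simp only [Fintype.sum_prod_type]
  have h3 := helperA (fun p : Fin R × Fin n × Fin n => v p.1 p.2.1 p.2.2)
      (fun p => w p.1 p.2.1 p.2.2) (fun p q => by
    rw [hv p.1 p.2.1 p.2.2 q.1 q.2.1 q.2.2]
    exact if_congr (by simp [Prod.ext_iff]) rfl rfl)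
  rw [h1, h2] at h3
  exact sqrt_bound _ σ hσ (le_trans h3 hw)

omit hcomm in
lemma keyB (r s : Fin R) (i j i' j' : Fin n) :
    star (l r i * l r j) * (l s i' * l s j') =
      if r = s ∧ i = i' ∧ j = j' then (1 : B) else 0 := by
  rw [star_mul, mul_assoc, ← mul_assoc (star (l r i)), hl]
  by_cases h1 : r = s ∧ i = i'
  · obtain ⟨rfl, rfl⟩ := h1
    rw [if_pos ⟨rfl, rfl⟩, one_mul, hl]
    by_cases h2 : j = j' <;> simp [h2]
  · rw [if_neg h1, zero_mul, mul_zero, if_neg (by tauto)]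

omit hcomm hl in
lemma prodsum_bound (x y : Fin n → A) (σ : ℝ) (hσ : 0 ≤ σ)
    (hx : ∑ i, ‖x i‖ ^ 2 ≤ σ) (hy : ∑ j, ‖y j‖ ^ 2 ≤ σ) :
    ∑ r : Fin R, ∑ i, ∑ j, ‖ψ (x i * y j)‖ ^ 2 ≤ (R : ℝ) * σ ^ 2 := by
  have hterm : ∀ i j, ‖ψ (x i * y j)‖ ^ 2 ≤ ‖x i‖ ^ 2 * ‖y j‖ ^ 2 := by
    intro i j
    rw [← mul_pow]
    refine pow_le_pow_left₀ (norm_nonneg _) ?_ 2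
    exact le_trans (NonUnitalStarAlgHom.norm_apply_le ψ _) (norm_mul_le _ _)
  calc ∑ r : Fin R, ∑ i, ∑ j, ‖ψ (x i * y j)‖ ^ 2
      ≤ ∑ r : Fin R, ∑ i, ∑ j, ‖x i‖ ^ 2 * ‖y j‖ ^ 2 :=
        Finset.sum_le_sum fun r _ => Finset.sum_le_sum fun i _ =>
          Finset.sum_le_sum fun j _ => hterm i j
    _ = ∑ r : Fin R, (∑ i, ‖x i‖ ^ 2) * (∑ j, ‖y j‖ ^ 2) := by
        refine Finset.sum_congr rfl fun r _ => ?_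
        rw [Finset.sum_mul_sum]
    _ ≤ ∑ r : Fin R, σ * σ :=
        Finset.sum_le_sum fun r _ =>
          mul_le_mul hx hy (Finset.sum_nonneg fun j _ => sq_nonneg _) hσ
    _ = (R : ℝ) * σ ^ 2 := by simp [sq, mul_comm]

omit hcomm in
lemma tripleU (x y : Fin n → A) (σ : ℝ) (hσ : 0 ≤ σ)
    (hx : ∑ i, ‖x i‖ ^ 2 ≤ σ) (hy : ∑ j, ‖y j‖ ^ 2 ≤ σ) :
    ‖∑ r, ∑ i, ∑ j, φ (l r i * l r j) * ψ (x i * y j)‖ ≤ Real.sqrt R * σ := by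
  refine tripleA (fun r i j => φ (l r i * l r j)) (fun r i j => ψ (x i * y j))
    (fun r i j s i' j' => ?_) σ hσ (prodsum_bound ψ x y σ hσ hx hy)
  rw [← map_star, ← map_mul, keyB l hl]
  split <;> simp

lemma tripleW (x y : Fin n → A) (σ : ℝ) (hσ : 0 ≤ σ)
    (hx : ∑ i, ‖x i‖ ^ 2 ≤ σ) (hy : ∑ j, ‖y j‖ ^ 2 ≤ σ) :
    ‖∑ r, ∑ i, ∑ j, φ (star (l r i) * star (l r j)) * ψ (x i * y j)‖ ≤ Real.sqrt R * σ := by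
  rw [← norm_star]
  have hst : star (∑ r, ∑ i, ∑ j, φ (star (l r i) * star (l r j)) * ψ (x i * y j))
      = ∑ r, ∑ i, ∑ j, φ (l r j * l r i) * ψ (star (x i * y j)) := by
    rw [star_sum]
    refine Finset.sum_congr rfl fun r _ => ?_
    rw [star_sum]
    refine Finset.sum_congr rfl fun i _ => ?_
    rw [star_sum]
    refine Finset.sum_congr rfl fun j _ => ?_
    simp only [star_mul, star_star, ← map_star]
    exact (hcomm _ _).symm
  rw [hst]
  refine tripleA (fun r i j => φ (l r j * l r i)) (fun r i j => ψ (star (x i * y j)))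
    (fun r i j s i' j' => ?_) σ hσ ?_
  · rw [← map_star, ← map_mul, keyB l hl]
    by_cases h : r = s ∧ i = i' ∧ j = j'
    · obtain ⟨rfl, rfl, rfl⟩ := h; simp
    · rw [if_neg (by tauto), map_zero, if_neg h]
  · have : ∀ (i j : Fin n), ‖ψ (star (x i * y j))‖ ^ 2 = ‖ψ (star (y j) * star (x i))‖ ^ 2 := by
      intro i j; rw [star_mul]
    calc ∑ r : Fin R, ∑ i, ∑ j, ‖ψ (star (x i * y j))‖ ^ 2
        = ∑ r : Fin R, ∑ i, ∑ j, ‖ψ (star (y j) * star (x i))‖ ^ 2 := by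
          simp only [this]
      _ = ∑ r : Fin R, ∑ j, ∑ i, ‖ψ (star (y j) * star (x i))‖ ^ 2 := by
          refine Finset.sum_congr rfl fun r _ => Finset.sum_comm
      _ ≤ (R : ℝ) * σ ^ 2 := by
          refine prodsum_bound ψ (fun j => star (y j)) (fun i => star (x i)) σ hσ ?_ ?_
          · simpa using hy
          · simpa using hx


lemma tripleV (x y : Fin n → A) (σ : ℝ) (hσ : 0 ≤ σ)
    (hx : ∑ i, ‖x i‖ ^ 2 ≤ σ) (hy : ∑ j, ‖y j‖ ^ 2 ≤ σ) :
    ‖∑ r, ∑ i, ∑ j, φ (l r i * star (l r j)) * ψ (x i * y j)‖ ≤ Real.sqrt R * σ := by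
  set Ar : Fin R → C := fun r => ∑ i, φ (l r i) * ψ (x i) with hAr
  set Br : Fin R → C := fun r => ∑ j, ψ (y j) * φ (star (l r j)) with hBr
  set D : A := ∑ j, y j * star (y j) with hD
  have hV : ∑ r, ∑ i, ∑ j, φ (l r i * star (l r j)) * ψ (x i * y j) = ∑ r, Ar r * Br r := by
    refine Finset.sum_congr rfl fun r _ => ?_
    rw [hAr, hBr, Finset.sum_mul_sum]
    refine Finset.sum_congr rfl fun i _ => Finset.sum_congr rfl fun j _ => ?_
    rw [mul_assoc, ← mul_assoc (ψ (x i)), ← map_mul ψ, ← hcomm, ← mul_assoc, ← map_mul φ]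
  have hBB : ∀ r s, Br r * star (Br s) = if r = s then ψ D else 0 := by
    intro r s
    have hstB : star (Br s) = ∑ j, φ (l s j) * ψ (star (y j)) := by
      rw [hBr, star_sum]
      refine Finset.sum_congr rfl fun j _ => ?_
      simp only [star_mul, star_star, ← map_star]
    rw [hBr, hstB, Finset.sum_mul_sum]
    have hterm : ∀ j j', (ψ (y j) * φ (star (l r j))) * (φ (l s j') * ψ (star (y j')))
        = if r = s ∧ j = j' then ψ (y j * star (y j')) else 0 := by
      intro j j'
      rw [mul_assoc, ← mul_assoc (φ (star (l r j))), ← map_mul φ, hl]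
      by_cases h : r = s ∧ j = j'
      · rw [if_pos h, map_one, one_mul, ← map_mul ψ, if_pos h]
      · rw [if_neg h, map_zero, zero_mul, mul_zero, if_neg h]
    rw [Finset.sum_congr rfl fun j _ => Finset.sum_congr rfl fun j' _ => hterm j j']
    by_cases hrs : r = s
    · subst hrs
      rw [if_pos rfl, hD, map_sum]
      refine Finset.sum_congr rfl fun j _ => ?_
      simp [Finset.sum_ite_eq]
    · rw [if_neg hrs]
      simp [hrs]
  have hVV : (∑ r, Ar r * Br r) * star (∑ r, Ar r * Br r)
      = ∑ r, Ar r * (ψ D * star (Ar r)) := by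
    rw [star_sum, Finset.sum_mul_sum]
    have hterm : ∀ r s, (Ar r * Br r) * star (Ar s * Br s)
        = if r = s then Ar r * (ψ D * star (Ar r)) else 0 := by
      intro r s
      rw [star_mul, mul_assoc, ← mul_assoc (Br r), hBB]
      by_cases h : r = s
      · subst h; rw [if_pos rfl, if_pos rfl]
      · rw [if_neg h, zero_mul, mul_zero, if_neg h]
    rw [Finset.sum_congr rfl fun r _ => Finset.sum_congr rfl fun s _ => hterm r s]
    refine Finset.sum_congr rfl fun r _ => ?_
    simp [Finset.sum_ite_eq]
  have hA_bound : ∀ r, ‖Ar r‖ ≤ Real.sqrt σ := fun r =>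
    single_bound φ ψ l hl r x σ hσ hx
  have hD_bound : ‖ψ D‖ ≤ σ := by
    refine le_trans (NonUnitalStarAlgHom.norm_apply_le ψ D) ?_
    rw [hD]
    refine le_trans (norm_sum_le _ _) (le_trans ?_ hy)
    refine Finset.sum_le_sum fun j _ => ?_
    rw [CStarRing.norm_self_mul_star, sq]
  have hsq : ‖∑ r, Ar r * Br r‖ ^ 2 ≤ (R : ℝ) * σ ^ 2 := by
    have h1 : ‖∑ r, Ar r * Br r‖ ^ 2 = ‖(∑ r, Ar r * Br r) * star (∑ r, Ar r * Br r)‖ := by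
      rw [CStarRing.norm_self_mul_star, sq]
    rw [h1, hVV]
    refine le_trans (norm_sum_le _ _) ?_
    have hterm : ∀ r : Fin R, ‖Ar r * (ψ D * star (Ar r))‖ ≤ σ ^ 2 := by
      intro r
      calc ‖Ar r * (ψ D * star (Ar r))‖ ≤ ‖Ar r‖ * (‖ψ D‖ * ‖star (Ar r)‖) :=
            le_trans (norm_mul_le _ _) (by gcongr; exact norm_mul_le _ _)
        _ = ‖Ar r‖ * ‖Ar r‖ * ‖ψ D‖ := by rw [norm_star]; ring
        _ ≤ Real.sqrt σ * Real.sqrt σ * σ := by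
            gcongr <;> first | exact hA_bound r | exact hD_bound |
              exact norm_nonneg _
        _ = σ ^ 2 := by rw [Real.mul_self_sqrt hσ, sq]
    calc ∑ r : Fin R, ‖Ar r * (ψ D * star (Ar r))‖ ≤ ∑ r : Fin R, σ ^ 2 :=
          Finset.sum_le_sum fun r _ => hterm r
      _ = (R : ℝ) * σ ^ 2 := by simp
  rw [hV]
  exact sqrt_bound _ σ hσ hsq

lemma expand (r : Fin R) (x y : Fin n → A) :
    (∑ i, φ (l r i + star (l r i)) * ψ (x i)) * (∑ j, φ (l r j + star (l r j)) * ψ (y j)) =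
    ψ (∑ i, x i * y i) +
      ((∑ i, ∑ j, φ (l r i * l r j) * ψ (x i * y j)) +
       (∑ i, ∑ j, φ (l r i * star (l r j)) * ψ (x i * y j)) +
       (∑ i, ∑ j, φ (star (l r i) * star (l r j)) * ψ (x i * y j))) := by
  rw [Finset.sum_mul_sum]
  have hterm : ∀ i j,
      (φ (l r i + star (l r i)) * ψ (x i)) * (φ (l r j + star (l r j)) * ψ (y j))
      = φ (l r i * l r j) * ψ (x i * y j) + φ (l r i * star (l r j)) * ψ (x i * y j)
        + (if i = j then ψ (x i * y j) else 0)
        + φ (star (l r i) * star (l r j)) * ψ (x i * y j) := by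
    intro i j
    have h1 : (φ (l r i + star (l r i)) * ψ (x i)) * (φ (l r j + star (l r j)) * ψ (y j))
        = φ ((l r i + star (l r i)) * (l r j + star (l r j))) * ψ (x i * y j) := by
      rw [mul_assoc, ← mul_assoc (ψ (x i)), ← hcomm, ← mul_assoc, ← mul_assoc,
        ← map_mul φ, mul_assoc, ← map_mul ψ]
    rw [h1]
    have h2 : (l r i + star (l r i)) * (l r j + star (l r j))
        = l r i * l r j + l r i * star (l r j)
          + (if r = r ∧ i = j then (1 : B) else 0) + star (l r i) * star (l r j) := by
      rw [add_mul, mul_add, mul_add, hl r r i j, ← add_assoc]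
    rw [h2, map_add, map_add, map_add, add_mul, add_mul, add_mul]
    have h3 : φ (if r = r ∧ i = j then (1 : B) else 0) * ψ (x i * y j)
        = if i = j then ψ (x i * y j) else 0 := by
      by_cases h : i = j <;> simp [h]
    rw [h3]
  rw [Finset.sum_congr rfl fun i _ => Finset.sum_congr rfl fun j _ => hterm i j]
  have hsplit : ∑ i, ∑ j, (φ (l r i * l r j) * ψ (x i * y j)
        + φ (l r i * star (l r j)) * ψ (x i * y j)
        + (if i = j then ψ (x i * y j) else 0)
        + φ (star (l r i) * star (l r j)) * ψ (x i * y j))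
      = (∑ i, ∑ j, φ (l r i * l r j) * ψ (x i * y j))
        + (∑ i, ∑ j, φ (l r i * star (l r j)) * ψ (x i * y j))
        + (∑ i, ∑ j, (if i = j then ψ (x i * y j) else 0))
        + (∑ i, ∑ j, φ (star (l r i) * star (l r j)) * ψ (x i * y j)) := by
    simp [Finset.sum_add_distrib]
  rw [hsplit]
  have hdiag : ∑ i, ∑ j, (if i = j then ψ (x i * y j) else 0) = ψ (∑ i, x i * y i) := by
    rw [map_sum]
    refine Finset.sum_congr rfl fun i _ => ?_
    simp [Finset.sum_ite_eq]
  rw [hdiag]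
  abel

end Helpers

/-- Lemma on semicircular systems: with `S_i(r) = l_i(r) + l_i(r)*`
for isometries `l_i(r)` with mutually orthogonal ranges, `‖b i‖ = ‖c i‖`, and
`b̃(r) = ∑ᵢ S_i(r) ⊗ b_i`, `c̃(r) = ∑ⱼ S_j(r) ⊗ c_j` (inside a common C*-algebra `C`
containing commuting isometric copies, as in the minimal tensor product `O_∞ ⊗ A`):
`(1/R) ∑_r ‖b̃(r)‖‖c̃(r)‖ ≤ 4 ∑ᵢ ‖bᵢ‖‖cᵢ‖` and
`‖1 ⊗ ∑ᵢ [bᵢ, cᵢ] − (1/R) ∑_r [b̃(r), c̃(r)]‖ ≤ (6/√R) ∑ᵢ ‖bᵢ‖‖cᵢ‖`. -/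
theorem stmt7 {B A C : Type*} [CStarAlgebra B] [CStarAlgebra A] [CStarAlgebra C]
    (φ : B →⋆ₐ[ℂ] C) (ψ : A →⋆ₐ[ℂ] C)
    (hcomm : ∀ (x : B) (a : A), φ x * ψ a = ψ a * φ x)
    (hφ_inj : Function.Injective φ) (hψ_inj : Function.Injective ψ)
    {n R : ℕ} (hR : 0 < R) (l : Fin R → Fin n → B)
    (hl : ∀ r s i j, star (l r i) * l s j = if r = s ∧ i = j then 1 else 0)
    (b c : Fin n → A) (hbc : ∀ i, ‖b i‖ = ‖c i‖)
    (bt ct : Fin R → C)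
    (hbt : ∀ r, bt r = ∑ i, φ (l r i + star (l r i)) * ψ (b i))
    (hct : ∀ r, ct r = ∑ j, φ (l r j + star (l r j)) * ψ (c j)) :
    (1 / (R : ℝ)) * ∑ r, ‖bt r‖ * ‖ct r‖ ≤ 4 * ∑ i, ‖b i‖ * ‖c i‖ ∧
    ‖ψ (∑ i, (b i * c i - c i * b i)) -
        ((R : ℂ))⁻¹ • ∑ r, (bt r * ct r - ct r * bt r)‖ ≤
      (6 / Real.sqrt R) * ∑ i, ‖b i‖ * ‖c i‖ := by
  classical
  set σ : ℝ := ∑ i, ‖b i‖ * ‖c i‖ with hσdef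
  have hσ0 : 0 ≤ σ := Finset.sum_nonneg fun i _ => mul_nonneg (norm_nonneg _) (norm_nonneg _)
  have hσb : ∑ i, ‖b i‖ ^ 2 ≤ σ :=
    le_of_eq (Finset.sum_congr rfl fun i _ => by rw [sq, hbc i])
  have hσc : ∑ i, ‖c i‖ ^ 2 ≤ σ :=
    le_of_eq (Finset.sum_congr rfl fun i _ => by rw [hbc i, sq])
  have hRpos : (0 : ℝ) < R := by exact_mod_cast hR
  constructor
  · -- part 1
    have hb' : ∀ r, ‖bt r‖ ≤ 2 * Real.sqrt σ := fun r => by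
      rw [hbt r]; exact plus_bound φ ψ hcomm l hl r b σ hσ0 hσb
    have hc' : ∀ r, ‖ct r‖ ≤ 2 * Real.sqrt σ := fun r => by
      rw [hct r]; exact plus_bound φ ψ hcomm l hl r c σ hσ0 hσc
    have hprod : ∀ r, ‖bt r‖ * ‖ct r‖ ≤ 4 * σ := fun r => by
      have h1 : ‖bt r‖ * ‖ct r‖ ≤ (2 * Real.sqrt σ) * (2 * Real.sqrt σ) :=
        mul_le_mul (hb' r) (hc' r) (norm_nonneg _) (by positivity)
      have h2 := Real.mul_self_sqrt hσ0
      nlinarith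
    have hsum4 : ∑ r, ‖bt r‖ * ‖ct r‖ ≤ (R : ℝ) * (4 * σ) := by
      calc ∑ r, ‖bt r‖ * ‖ct r‖ ≤ ∑ _r : Fin R, (4 * σ) :=
            Finset.sum_le_sum fun r _ => hprod r
        _ = (R : ℝ) * (4 * σ) := by simp [mul_comm]
    calc (1 / (R : ℝ)) * ∑ r, ‖bt r‖ * ‖ct r‖
        ≤ (1 / (R : ℝ)) * ((R : ℝ) * (4 * σ)) :=
          mul_le_mul_of_nonneg_left hsum4 (by positivity)
      _ = 4 * σ := by field_simp
  · -- part 2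
    have key1 : ∀ r, bt r * ct r = ψ (∑ i, b i * c i) +
        ((∑ i, ∑ j, φ (l r i * l r j) * ψ (b i * c j)) +
         (∑ i, ∑ j, φ (l r i * star (l r j)) * ψ (b i * c j)) +
         (∑ i, ∑ j, φ (star (l r i) * star (l r j)) * ψ (b i * c j))) := fun r => by
      rw [hbt r, hct r]; exact expand φ ψ hcomm l hl r b c
    have key2 : ∀ r, ct r * bt r = ψ (∑ i, c i * b i) +
        ((∑ i, ∑ j, φ (l r i * l r j) * ψ (c i * b j)) +
         (∑ i, ∑ j, φ (l r i * star (l r j)) * ψ (c i * b j)) +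
         (∑ i, ∑ j, φ (star (l r i) * star (l r j)) * ψ (c i * b j))) := fun r => by
      rw [hbt r, hct r]; exact expand φ ψ hcomm l hl r c b
    have hψsplit : ψ (∑ i, (b i * c i - c i * b i))
        = ψ (∑ i, b i * c i) - ψ (∑ i, c i * b i) := by
      rw [← map_sub, Finset.sum_sub_distrib]
    have hdiff : ∀ r, bt r * ct r - ct r * bt r
        = ψ (∑ i, (b i * c i - c i * b i)) +
          (((∑ i, ∑ j, φ (l r i * l r j) * ψ (b i * c j)) +
            (∑ i, ∑ j, φ (l r i * star (l r j)) * ψ (b i * c j)) +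
            (∑ i, ∑ j, φ (star (l r i) * star (l r j)) * ψ (b i * c j))) -
           ((∑ i, ∑ j, φ (l r i * l r j) * ψ (c i * b j)) +
            (∑ i, ∑ j, φ (l r i * star (l r j)) * ψ (c i * b j)) +
            (∑ i, ∑ j, φ (star (l r i) * star (l r j)) * ψ (c i * b j)))) := fun r => by
      rw [key1 r, key2 r, hψsplit]; abel
    set E : C := ∑ r,
        (((∑ i, ∑ j, φ (l r i * l r j) * ψ (b i * c j)) +
          (∑ i, ∑ j, φ (l r i * star (l r j)) * ψ (b i * c j)) +
          (∑ i, ∑ j, φ (star (l r i) * star (l r j)) * ψ (b i * c j))) -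
         ((∑ i, ∑ j, φ (l r i * l r j) * ψ (c i * b j)) +
          (∑ i, ∑ j, φ (l r i * star (l r j)) * ψ (c i * b j)) +
          (∑ i, ∑ j, φ (star (l r i) * star (l r j)) * ψ (c i * b j)))) with hE
    have hsum : ∑ r, (bt r * ct r - ct r * bt r)
        = (R : ℕ) • ψ (∑ i, (b i * c i - c i * b i)) + E := by
      rw [Finset.sum_congr rfl fun r _ => hdiff r, Finset.sum_add_distrib,
        Finset.sum_const, Finset.card_univ, Fintype.card_fin, hE]
    have hvec : ψ (∑ i, (b i * c i - c i * b i)) -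
        ((R : ℂ))⁻¹ • ∑ r, (bt r * ct r - ct r * bt r) = -(((R : ℂ))⁻¹ • E) := by
      rw [hsum, smul_add]
      have hRC : ((R : ℂ))⁻¹ • ((R : ℕ) • ψ (∑ i, (b i * c i - c i * b i)))
          = ψ (∑ i, (b i * c i - c i * b i)) := by
        rw [← Nat.cast_smul_eq_nsmul ℂ, smul_smul,
          inv_mul_cancel₀ (by exact_mod_cast hR.ne' : ((R : ℂ)) ≠ 0), one_smul]
      rw [hRC]
      abel
    have hEbound : ‖E‖ ≤ 6 * (Real.sqrt R * σ) := by
      have h1 := tripleU φ ψ l hl b c σ hσ0 hσb hσc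
      have h2 := tripleV φ ψ hcomm l hl b c σ hσ0 hσb hσc
      have h3 := tripleW φ ψ hcomm l hl b c σ hσ0 hσb hσc
      have h4 := tripleU φ ψ l hl c b σ hσ0 hσc hσb
      have h5 := tripleV φ ψ hcomm l hl c b σ hσ0 hσc hσb
      have h6 := tripleW φ ψ hcomm l hl c b σ hσ0 hσc hσb
      have hEsplit : E =
          ((∑ r, ∑ i, ∑ j, φ (l r i * l r j) * ψ (b i * c j)) +
           (∑ r, ∑ i, ∑ j, φ (l r i * star (l r j)) * ψ (b i * c j)) +
           (∑ r, ∑ i, ∑ j, φ (star (l r i) * star (l r j)) * ψ (b i * c j))) -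
          ((∑ r, ∑ i, ∑ j, φ (l r i * l r j) * ψ (c i * b j)) +
           (∑ r, ∑ i, ∑ j, φ (l r i * star (l r j)) * ψ (c i * b j)) +
           (∑ r, ∑ i, ∑ j, φ (star (l r i) * star (l r j)) * ψ (c i * b j))) := by
        rw [hE, Finset.sum_sub_distrib, Finset.sum_add_distrib, Finset.sum_add_distrib,
          Finset.sum_add_distrib, Finset.sum_add_distrib]
      rw [hEsplit]
      refine le_trans (norm_sub_le _ _) ?_
      have hA := le_trans (norm_add₃_le) (add_le_add (add_le_add h1 h2) h3)
      have hB := le_trans (norm_add₃_le) (add_le_add (add_le_add h4 h5) h6)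
      calc _ ≤ (Real.sqrt R * σ + Real.sqrt R * σ + Real.sqrt R * σ) +
            (Real.sqrt R * σ + Real.sqrt R * σ + Real.sqrt R * σ) := add_le_add hA hB
        _ = 6 * (Real.sqrt R * σ) := by ring
    rw [hvec, norm_neg, norm_smul]
    have hnormR : ‖((R : ℂ))⁻¹‖ = (R : ℝ)⁻¹ := by
      rw [norm_inv, Complex.norm_natCast]
    rw [hnormR]
    have hsq : Real.sqrt R * Real.sqrt R = (R : ℝ) := Real.mul_self_sqrt hRpos.le
    have hsqrtpos : 0 < Real.sqrt R := Real.sqrt_pos.mpr hRpos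
    calc (R : ℝ)⁻¹ * ‖E‖ ≤ (R : ℝ)⁻¹ * (6 * (Real.sqrt R * σ)) := by
          exact mul_le_mul_of_nonneg_left hEbound (by positivity)
      _ = (6 / Real.sqrt R) * σ := by
          field_simp
          nlinarith [hsq]
end

section
/- Let A be a unital C*-algebra and X ⊂ A a separable subset. Then there exists a separable C*-subalgebra B ⊂ A containing X such that every tracial state on B extends to a tracial state on A (i.e., the restriction map T(A) → T(B) is surjective). -/
open scoped ComplexOrder

open scoped Pointwise
open TopologicalSpace (IsSeparable)

section auxiliary

variable {B : Type*} [CStarAlgebra B]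


variable {B : Type*} [CStarAlgebra B]

lemma tr_real (τ : B →L[ℂ] ℂ) (hpos : ∀ b : B, 0 ≤ τ (star b * b)) {h : B}
    (hh : IsSelfAdjoint h) : (starRingEnd ℂ) (τ h) = τ h := by
  letI := CStarAlgebra.spectralOrder B
  letI := CStarAlgebra.spectralOrderedRing B
  have hnn : ∀ y : B, 0 ≤ y → 0 ≤ τ y := by
    intro y hy
    have h1 : CFC.sqrt y * CFC.sqrt y = y := CFC.sqrt_mul_sqrt_self y hy
    have h2 : star (CFC.sqrt y) = CFC.sqrt y :=
      (IsSelfAdjoint.of_nonneg (CFC.sqrt_nonneg (a := y))).star_eq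
    have := hpos (CFC.sqrt y)
    rwa [h2, h1] at this
  have hd : h⁺ - h⁻ = h := CFC.posPart_sub_negPart h hh
  have h1 : 0 ≤ τ h⁺ := hnn _ (CFC.posPart_nonneg h)
  have h2 : 0 ≤ τ h⁻ := hnn _ (CFC.negPart_nonneg h)
  have e : τ h⁺ - τ h⁻ = τ h := by rw [← map_sub, hd]
  rw [← e, map_sub, Complex.conj_eq_iff_im.mpr, Complex.conj_eq_iff_im.mpr]
  · exact (Complex.nonneg_iff.mp h2).2.symm
  · exact (Complex.nonneg_iff.mp h1).2.symm

lemma tr_star (τ : B →L[ℂ] ℂ) (hpos : ∀ b : B, 0 ≤ τ (star b * b)) (b : B) :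
    τ (star b) = (starRingEnd ℂ) (τ b) := by
  have hre : IsSelfAdjoint (b + star b) := by
    rw [IsSelfAdjoint]; simp [star_add, add_comm]
  have him : IsSelfAdjoint (Complex.I • (star b - b)) := by
    rw [IsSelfAdjoint]
    simp only [star_smul, star_sub, RCLike.star_def, Complex.conj_I, star_star, neg_smul,
      smul_sub]
    module
  have e1 := tr_real τ hpos hre
  have e2 := tr_real τ hpos him
  simp only [map_add, map_smul, map_sub, smul_eq_mul, map_mul, Complex.conj_I] at e1 e2
  have e2' : (starRingEnd ℂ) (τ (star b)) - (starRingEnd ℂ) (τ b)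
      = -(τ (star b) - τ b) := by
    have := mul_left_cancel₀ Complex.I_ne_zero (show Complex.I *
        -((starRingEnd ℂ) (τ (star b)) - (starRingEnd ℂ) (τ b))
        = Complex.I * (τ (star b) - τ b) by linear_combination e2)
    linear_combination -this
  linear_combination e2' / 2 - e1 / 2

lemma tr_norm_le (τ : B →L[ℂ] ℂ) (h1 : τ 1 = 1) (hpos : ∀ b : B, 0 ≤ τ (star b * b)) :
    ‖τ‖ ≤ 1 := by
  letI := CStarAlgebra.spectralOrder B
  letI := CStarAlgebra.spectralOrderedRing B
  have hnn : ∀ y : B, 0 ≤ y → 0 ≤ τ y := by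
    intro y hy
    have hmul : CFC.sqrt y * CFC.sqrt y = y := CFC.sqrt_mul_sqrt_self y hy
    have hs : star (CFC.sqrt y) = CFC.sqrt y :=
      (IsSelfAdjoint.of_nonneg (CFC.sqrt_nonneg (a := y))).star_eq
    have := hpos (CFC.sqrt y)
    rwa [hs, hmul] at this
  refine ContinuousLinearMap.opNorm_le_bound τ zero_le_one (fun b => ?_)
  rw [one_mul]
  -- step 1 : τ (star b * b) ≤ ‖b‖ ^ 2
  have hsa : IsSelfAdjoint (star b * b) := IsSelfAdjoint.star_mul_self b
  have hub : star b * b ≤ algebraMap ℝ B ‖star b * b‖ :=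
    IsSelfAdjoint.le_algebraMap_norm_self hsa
  have step1 : 0 ≤ τ (algebraMap ℝ B ‖star b * b‖ - star b * b) := hnn _ (by
    rw [sub_nonneg]; exact hub)
  -- step 2 : Cauchy-Schwarz specialization
  have key : 0 ≤ τ (star (b - τ b • 1) * (b - τ b • 1)) := hpos _
  have expand : star (b - τ b • 1) * (b - τ b • 1)
      = star b * b - τ b • star b - (starRingEnd ℂ) (τ b) • b
        + ((starRingEnd ℂ) (τ b) * τ b) • (1 : B) := by
    simp only [star_sub, star_smul, star_one, RCLike.star_def, sub_mul, mul_sub,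
      smul_mul_assoc, mul_smul_comm, smul_smul, mul_one, one_mul]
    abel_nf
    module
  rw [expand] at key
  simp only [map_add, map_sub, map_smul, smul_eq_mul, h1, mul_one] at key
  rw [tr_star τ hpos b] at key
  have key2 : Complex.normSq (τ b) ≤ (τ (star b * b)).re := by
    have := (Complex.nonneg_iff.mp key).1
    simp only [Complex.sub_re, Complex.add_re, Complex.mul_re] at this ⊢
    have hsq : ((starRingEnd ℂ) (τ b) * τ b).re = Complex.normSq (τ b) := by
      simp [Complex.normSq_apply, Complex.mul_re]; try ring
    rw [Complex.normSq_apply]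
    nlinarith [this, hsq, Complex.normSq_apply (τ b),
      Complex.mul_re ((starRingEnd ℂ) (τ b)) (τ b),
      Complex.conj_re (τ b), Complex.conj_im (τ b)]
  have key3 : (τ (star b * b)).re ≤ ‖b‖ ^ 2 := by
    have := (Complex.nonneg_iff.mp step1).1
    simp only [map_sub, Complex.sub_re] at this
    have halg : τ (algebraMap ℝ B ‖star b * b‖) = (‖star b * b‖ : ℂ) := by
      rw [Algebra.algebraMap_eq_smul_one]
      have : ((‖star b * b‖ : ℝ) : ℂ) • (1:B) = (‖star b * b‖ : ℂ) • (1:B) := by norm_cast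
      rw [show (‖star b * b‖ : ℝ) • (1:B) = ((‖star b * b‖ :ℝ):ℂ) • (1:B) by
        simp [Complex.coe_smul]]
      rw [map_smul, h1, smul_eq_mul, mul_one]
    rw [halg] at this
    simp only [Complex.ofReal_re] at this
    have : (τ (star b * b)).re ≤ ‖star b * b‖ := by linarith
    rwa [CStarRing.norm_star_mul_self, ← pow_two] at this
  have : ‖τ b‖ ^ 2 ≤ ‖b‖ ^ 2 := by
    rw [← Complex.normSq_eq_norm_sq]  -- maybe wrong name
    linarith
  have hb : (0:ℝ) ≤ ‖b‖ := norm_nonneg b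
  nlinarith [norm_nonneg (τ b)]




lemma st_real (φ : B →L[ℂ] ℂ) (h1 : φ 1 = 1) (hn : ‖φ‖ ≤ 1) {h : B}
    (hh : IsSelfAdjoint h) : (φ h).im = 0 := by
  rcases subsingleton_or_nontrivial B with hsub | hnt
  · have : h = 0 := Subsingleton.elim _ _
    simp [this]
  by_contra him
  set β := (φ h).im with hβ
  -- consider w t = h + (I*t)•1
  have key : ∀ t : ℝ, (φ h).re ^ 2 + (β + t) ^ 2 ≤ ‖h‖ ^ 2 + t ^ 2 := by
    intro t
    have hw : ‖h + ((t : ℂ) * Complex.I) • 1‖ ^ 2 ≤ ‖h‖ ^ 2 + t ^ 2 := by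
      have hsq : ‖h + ((t : ℂ) * Complex.I) • 1‖ ^ 2
          = ‖star (h + ((t : ℂ) * Complex.I) • 1) * (h + ((t : ℂ) * Complex.I) • 1)‖ := by
        rw [CStarRing.norm_star_mul_self, pow_two]
      rw [hsq]
      have hexp : star (h + ((t : ℂ) * Complex.I) • 1) * (h + ((t : ℂ) * Complex.I) • 1)
          = h * h + ((t : ℂ) ^ 2) • (1 : B) := by
        simp only [star_add, star_smul, star_one, RCLike.star_def, map_mul, Complex.conj_I,
          Complex.conj_ofReal, add_mul, mul_add, smul_mul_assoc, mul_smul_comm, smul_smul,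
          one_mul, mul_one, hh.star_eq]
        rw [show ((t:ℂ)^2) • (1:B) = (((t:ℂ) * -Complex.I) * ((t:ℂ) * Complex.I)) • (1:B) by
          congr 1; ring_nf; rw [Complex.I_sq]; ring]
        module
      rw [hexp]
      calc ‖h * h + ((t : ℂ) ^ 2) • (1 : B)‖ ≤ ‖h * h‖ + ‖((t : ℂ) ^ 2) • (1 : B)‖ :=
            norm_add_le _ _
        _ ≤ ‖h‖ ^ 2 + t ^ 2 := by
            have := norm_mul_le h h
            have h2 : ‖((t : ℂ) ^ 2) • (1 : B)‖ ≤ t ^ 2 := by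
              rw [norm_smul, norm_one, mul_one, norm_pow]
              simp [sq_abs]
            nlinarith [sq_nonneg t]
    have hφw : ‖φ (h + ((t : ℂ) * Complex.I) • 1)‖ ≤ ‖h + ((t : ℂ) * Complex.I) • 1‖ := by
      calc ‖φ _‖ ≤ ‖φ‖ * ‖_‖ := φ.le_opNorm _
        _ ≤ _ := by nlinarith [norm_nonneg (h + ((t : ℂ) * Complex.I) • 1), hn,
            norm_nonneg φ]
    have hval : φ (h + ((t : ℂ) * Complex.I) • 1) = φ h + (t : ℂ) * Complex.I := by
      rw [map_add, map_smul, h1, smul_eq_mul, mul_one]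
    rw [hval] at hφw
    have : ‖φ h + (t:ℂ) * Complex.I‖ ^ 2 = (φ h).re ^ 2 + (β + t) ^ 2 := by
      rw [← Complex.normSq_eq_norm_sq]  -- check name
      simp [Complex.normSq_apply, hβ]
      ring
    nlinarith [hφw, hw, norm_nonneg (φ h + (t:ℂ)*Complex.I),
      norm_nonneg (h + ((t : ℂ) * Complex.I) • 1)]
  set r := (φ h).re with hr
  set t := (‖h‖^2 + 1 - r^2 - β^2)/(2*β) with htdef
  have ht : 2*β*t = ‖h‖^2 + 1 - r^2 - β^2 := by
    rw [htdef]; field_simp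
  have hk := key t
  nlinarith [hk, ht]

lemma st_pos (φ : B →L[ℂ] ℂ) (h1 : φ 1 = 1) (hn : ‖φ‖ ≤ 1) (a : B) :
    0 ≤ φ (star a * a) := by
  rcases subsingleton_or_nontrivial B with hsub | hnt
  · have : star a * a = 0 := Subsingleton.elim _ _
    simp [this]
  letI := CStarAlgebra.spectralOrder B
  letI := CStarAlgebra.spectralOrderedRing B
  set y := star a * a with hy
  have hy0 : 0 ≤ y := star_mul_self_nonneg a
  have hysa : IsSelfAdjoint y := IsSelfAdjoint.of_nonneg hy0
  set x := algebraMap ℝ B ‖y‖ - y with hx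
  have hx0 : 0 ≤ x := by rw [hx, sub_nonneg]; exact IsSelfAdjoint.le_algebraMap_norm_self hysa
  have hxsa : IsSelfAdjoint x := IsSelfAdjoint.of_nonneg hx0
  have hxn : ‖x‖ ≤ ‖y‖ := by
    rw [CStarAlgebra.norm_le_iff_le_algebraMap x (norm_nonneg y) hx0]
    rw [hx]
    have : (0:B) ≤ y := hy0
    calc algebraMap ℝ B ‖y‖ - y ≤ algebraMap ℝ B ‖y‖ - 0 := by
          exact sub_le_sub_left hy0 _
      _ = algebraMap ℝ B ‖y‖ := by rw [sub_zero]
  have hφx : ‖φ x‖ ≤ ‖y‖ := by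
    calc ‖φ x‖ ≤ ‖φ‖ * ‖x‖ := φ.le_opNorm x
      _ ≤ ‖y‖ := by nlinarith [norm_nonneg x, norm_nonneg φ, norm_nonneg y]
  have halg : φ (algebraMap ℝ B ‖y‖) = (‖y‖ : ℂ) := by
    rw [Algebra.algebraMap_eq_smul_one]
    rw [show (‖y‖ : ℝ) • (1:B) = ((‖y‖:ℝ):ℂ) • (1:B) by simp [Complex.coe_smul]]
    rw [map_smul, h1, smul_eq_mul, mul_one]
  have him : (φ y).im = 0 := st_real φ h1 hn hysa
  have hximr : (φ x).im = 0 := st_real φ h1 hn hxsa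
  have hval : φ y = (‖y‖ : ℂ) - φ x := by rw [hx, map_sub, halg]; ring
  rw [Complex.nonneg_iff]
  constructor
  · rw [hval]
    simp only [Complex.sub_re, Complex.ofReal_re]
    have : |(φ x).re| ≤ ‖φ x‖ := Complex.abs_re_le_norm (φ x)
    have := abs_le.mp (le_trans this hφx)
    linarith [this.2]
  · exact him.symm ▸ rfl

section algebra

variable {A : Type*} [CStarAlgebra A]

lemma isSeparable_adjoin {s : Set A} (hs : IsSeparable s) :
    IsSeparable (((StarAlgebra.adjoin ℂ s : StarSubalgebra ℂ A)) : Set A) := by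
  obtain ⟨c, hc, hsc⟩ := hs
  set c' : Set A := c ∪ star c with hc'def
  have hc'c : c'.Countable := by
    refine hc.union ?_
    rw [← Set.image_star]
    exact hc.image _
  have hsc' : s ∪ star s ⊆ closure c' := by
    apply Set.union_subset
    · exact hsc.trans (closure_mono Set.subset_union_left)
    · rw [← Set.image_star]
      intro x hx
      obtain ⟨y, hy, rfl⟩ := hx
      have h1 : star y ∈ star '' closure c := ⟨y, hsc hy, rfl⟩
      have h2 : star '' closure c ⊆ closure (star '' c) :=
        image_closure_subset_closure_image continuous_star
      exact closure_mono (by rw [Set.image_star]; exact Set.subset_union_right) (h2 h1)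
  set M := Submonoid.closure c' with hMdef
  have hM : (M : Set A).Countable := by
    have hcnt : Countable ↥c' := hc'c.to_subtype
    have hsub : (M : Set A) ⊆ Set.range (fun l : List c' => (l.map Subtype.val).prod) := by
      intro x hx
      obtain ⟨l, hl, rfl⟩ := Submonoid.exists_list_of_mem_closure hx
      refine ⟨l.attach.map (fun y => (⟨y.1, hl y.1 y.2⟩ : c')), ?_⟩
      simp [List.map_map, Function.comp]
    exact (Set.countable_range _).mono hsub
  have hMclos : ((Submonoid.closure (s ∪ star s) : Submonoid A) : Set A) ⊆ closure (M : Set A) := by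
    have : Submonoid.closure (s ∪ star s) ≤ M.topologicalClosure := by
      rw [Submonoid.closure_le]
      exact hsc'.trans (closure_mono (Submonoid.subset_closure))
    exact this
  have sepM : IsSeparable ((Submonoid.closure (s ∪ star s) : Submonoid A) : Set A) :=
    ⟨M, hM, hMclos⟩
  have sepSpan : IsSeparable
      ((Submodule.span ℂ ((Submonoid.closure (s ∪ star s) : Submonoid A) : Set A)) : Set A) :=
    sepM.span
  have key : ((StarAlgebra.adjoin ℂ s : StarSubalgebra ℂ A) : Set A)
      = ((Submodule.span ℂ ((Submonoid.closure (s ∪ star s) : Submonoid A) : Set A)) : Set A) := by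
    have := StarAlgebra.adjoin_eq_span (R := ℂ) (A := A) s
    exact congrArg SetLike.coe this
  rw [key]
  exact sepSpan

/-- tracial states as a subset of the weak dual -/
def Tset (A : Type*) [CStarAlgebra A] : Set (WeakDual ℂ A) :=
  {φ | φ 1 = 1 ∧ (∀ a : A, 0 ≤ φ (star a * a)) ∧ ∀ a b : A, φ (a * b) = φ (b * a)}

lemma isClosed_nonnegC : IsClosed {z : ℂ | 0 ≤ z} := by
  have : {z : ℂ | 0 ≤ z} = Complex.re ⁻¹' Set.Ici 0 ∩ Complex.im ⁻¹' {0} := by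
    ext z
    simp only [Set.mem_setOf_eq, Set.mem_inter_iff, Set.mem_preimage, Set.mem_Ici,
      Set.mem_singleton_iff]
    rw [Complex.le_def]
    simp [eq_comm]
  rw [this]
  exact (isClosed_Ici.preimage Complex.continuous_re).inter
    (isClosed_singleton.preimage Complex.continuous_im)

lemma isClosed_Tset : IsClosed (Tset A) := by
  have h1 : IsClosed {φ : WeakDual ℂ A | φ 1 = 1} :=
    isClosed_eq (WeakDual.eval_continuous 1) continuous_const
  have h2 : IsClosed {φ : WeakDual ℂ A | ∀ a : A, 0 ≤ φ (star a * a)} := by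
    rw [Set.setOf_forall]
    exact isClosed_iInter fun a =>
      isClosed_nonnegC.preimage (WeakDual.eval_continuous (star a * a))
  have h3 : IsClosed {φ : WeakDual ℂ A | ∀ a b : A, φ (a * b) = φ (b * a)} := by
    rw [Set.setOf_forall]
    refine isClosed_iInter fun a => ?_
    rw [Set.setOf_forall]
    exact isClosed_iInter fun b =>
      isClosed_eq (WeakDual.eval_continuous (a * b)) (WeakDual.eval_continuous (b * a))
  exact (h1.inter (h2.inter h3)).mono (by intro φ hφ; exact hφ) |>.mono le_rfl |>.mono le_rfl
    |>.mono le_rfl |>.mono le_rfl |>.mono le_rfl |>.mono le_rfl |>.mono le_rfl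

lemma Tset_subset_ball : Tset A ⊆ WeakDual.toStrongDual ⁻¹' Metric.closedBall 0 1 := by
  intro φ hφ
  simp only [Set.mem_preimage, Metric.mem_closedBall, dist_zero_right]
  exact tr_norm_le (WeakDual.toStrongDual φ) hφ.1 hφ.2.1

lemma isCompact_Tset : IsCompact (Tset A) :=
  (WeakDual.isCompact_closedBall (𝕜 := ℂ) (E := A) 0 1).of_isClosed_subset isClosed_Tset Tset_subset_ball

/-- trace condition on a star subalgebra, matching the theorem hypothesis -/
def IsTrStateOn (C : StarSubalgebra ℂ A) (τ : C →L[ℂ] ℂ) : Prop :=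
  τ 1 = 1 ∧ (∀ b : C, 0 ≤ τ (star b * b)) ∧ ∀ b c : C, τ (b * c) = τ (c * b)

/-- generated closed star subalgebra -/
noncomputable def genC (s : Set A) : StarSubalgebra ℂ A :=
  (StarAlgebra.adjoin ℂ s).topologicalClosure

lemma genC_isClosed (s : Set A) : IsClosed ((genC s : StarSubalgebra ℂ A) : Set A) :=
  StarSubalgebra.isClosed_topologicalClosure _

lemma genC_isSeparable {s : Set A} (hs : IsSeparable s) :
    IsSeparable ((genC s : StarSubalgebra ℂ A) : Set A) := by
  rw [genC, StarSubalgebra.topologicalClosure_coe]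
  exact (isSeparable_adjoin hs).closure

lemma subset_genC (s : Set A) : s ⊆ (genC s : StarSubalgebra ℂ A) := by
  intro x hx
  exact (StarSubalgebra.le_topologicalClosure _) (StarAlgebra.subset_adjoin ℂ s hx)

lemma one_step (C₀ : StarSubalgebra ℂ A) (h₀c : IsClosed (C₀ : Set A))
    (h₀s : IsSeparable (C₀ : Set A)) (F : Finset A) (hF : (F : Set A) ⊆ (C₀ : Set A))
    {ε : ℝ} (hε : 0 < ε) :
    ∃ C : StarSubalgebra ℂ A, ∃ hle : C₀ ≤ C, IsClosed (C : Set A) ∧ IsSeparable (C : Set A) ∧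
      ∀ τ : C →L[ℂ] ℂ, IsTrStateOn C τ → ∃ σ ∈ Tset A,
        ∀ x (hx : x ∈ F), ‖τ ⟨x, hle (hF hx)⟩ - σ x‖ ≤ ε := by
  classical
  by_contra hcon
  push_neg at hcon
  -- index type
  set I := {C : StarSubalgebra ℂ A // C₀ ≤ C ∧ IsClosed (C : Set A) ∧ IsSeparable (C : Set A)}
    with hI
  haveI : Nonempty I := ⟨⟨C₀, le_rfl, h₀c, h₀s⟩⟩
  -- choose bad traces
  have hbad : ∀ i : I, ∃ τ : i.1 →L[ℂ] ℂ, IsTrStateOn i.1 τ ∧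
      ∀ σ ∈ Tset A, ∃ x, ∃ hx : x ∈ F, ε < ‖τ ⟨x, i.2.1 (hF hx)⟩ - σ x‖ := by
    intro i
    obtain ⟨τ, hτ, hb⟩ := hcon i.1 i.2.1 i.2.2.1 i.2.2.2
    exact ⟨τ, hτ, hb⟩
  choose τf hτf hbadf using hbad
  -- extend to A via Hahn–Banach
  have hext : ∀ i : I, ∃ φ : A →L[ℂ] ℂ, (∀ x : i.1, φ x = τf i x) ∧ ‖φ‖ ≤ 1 := by
    intro i
    haveI : IsClosed ((i.1 : StarSubalgebra ℂ A) : Set A) := i.2.2.1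
    have hn : ‖τf i‖ ≤ 1 := tr_norm_le (τf i) (hτf i).1 (hτf i).2.1
    obtain ⟨φ, hφe, hφn⟩ :=
      exists_extension_norm_eq (𝕜 := ℂ) (p := i.1.toSubalgebra.toSubmodule) (τf i)
    exact ⟨φ, hφe, hφn.le.trans hn⟩
  choose φf hφe hφn using hext
  -- the filter
  set f : Filter I := ⨅ (S : Finset A), Filter.principal {i : I | ∀ a ∈ S, a ∈ i.1} with hf
  have hne : ∀ S : Finset A, {i : I | ∀ a ∈ S, a ∈ i.1}.Nonempty := by
    intro S
    refine ⟨⟨genC ((C₀ : Set A) ∪ (S : Set A)), ?_, genC_isClosed _, ?_⟩, ?_⟩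
    · intro x hx; exact subset_genC _ (Set.mem_union_left _ hx)
    · exact genC_isSeparable (h₀s.union (S.finite_toSet.isSeparable))
    · intro a ha; exact subset_genC _ (Set.mem_union_right _ ha)
  haveI hfne : f.NeBot := by
    refine Filter.iInf_neBot_of_directed ?_ ?_
    · intro S T
      exact ⟨S ∪ T,
        Filter.principal_mono.mpr (fun i hi a ha => hi a (Finset.mem_union_left T ha)),
        Filter.principal_mono.mpr (fun i hi a ha => hi a (Finset.mem_union_right S ha))⟩
    · intro S
      exact Filter.principal_neBot_iff.mpr (hne S)
  set U := Ultrafilter.of f with hU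
  have hUf : (U : Filter I) ≤ f := Ultrafilter.of_le f
  have hmem : ∀ a : A, {i : I | a ∈ i.1} ∈ U := by
    intro a
    have h1 : f ≤ Filter.principal {i : I | ∀ b ∈ ({a} : Finset A), b ∈ i.1} := iInf_le _ _
    have := hUf.trans h1
    rw [Filter.le_principal_iff] at this
    apply Filter.mem_of_superset this
    intro i hi
    exact hi a (by simp)
  -- the limit point
  set g : I → WeakDual ℂ A := fun i => StrongDual.toWeakDual (φf i) with hg
  have hgK : ∀ i, g i ∈ WeakDual.toStrongDual ⁻¹' Metric.closedBall 0 1 := by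
    intro i
    simp only [Set.mem_preimage, Metric.mem_closedBall, dist_zero_right]
    exact hφn i
  obtain ⟨φ, hφK, hconv⟩ := (WeakDual.isCompact_closedBall (𝕜 := ℂ) (E := A) 0 1).ultrafilter_le_nhds
    (U.map g) (by rw [Ultrafilter.coe_map, Filter.le_principal_iff, Filter.mem_map]
                  exact Filter.univ_mem' hgK)
  have heval : ∀ a : A, Filter.Tendsto (fun i => φf i a) (U : Filter I) (nhds (φ a)) := by
    intro a
    have hcont : Continuous fun ψ : WeakDual ℂ A => ψ a := WeakDual.eval_continuous a
    have : Filter.Tendsto g (U : Filter I) (nhds φ) := hconv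
    exact (hcont.continuousAt.tendsto.comp this)
  -- φ is a tracial state
  have hφ1 : φ 1 = 1 := by
    refine tendsto_nhds_unique (heval 1) ?_
    have : ∀ᶠ i in (U : Filter I), φf i 1 = 1 := by
      refine Filter.Eventually.of_forall fun i => ?_
      have h1 : φf i ((1 : i.1) : A) = τf i 1 := hφe i 1
      simpa using h1.trans (hτf i).1
    rw [Filter.tendsto_congr' this]
    exact tendsto_const_nhds
  have hφtr : ∀ a b : A, φ (a * b) = φ (b * a) := by
    intro a b
    refine tendsto_nhds_unique (Filter.Tendsto.congr' ?_ (heval (a * b))) (heval (b * a))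
    have hab : {i : I | a ∈ i.1} ∩ {i : I | b ∈ i.1} ∈ U :=
      Filter.inter_mem (hmem a) (hmem b)
    apply Filter.mem_of_superset hab
    rintro i ⟨ha, hb⟩
    have e1 : φf i (a * b) = τf i (⟨a, ha⟩ * ⟨b, hb⟩) := hφe i (⟨a, ha⟩ * ⟨b, hb⟩)
    have e2 : φf i (b * a) = τf i (⟨b, hb⟩ * ⟨a, ha⟩) := hφe i (⟨b, hb⟩ * ⟨a, ha⟩)
    show φf i (a * b) = φf i (b * a)
    rw [e1, e2, (hτf i).2.2]
  have hφn1 : ‖WeakDual.toStrongDual φ‖ ≤ 1 := by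
    simpa only [Set.mem_preimage, Metric.mem_closedBall, dist_zero_right] using hφK
  have hφpos : ∀ a : A, 0 ≤ φ (star a * a) := fun a =>
    st_pos (WeakDual.toStrongDual φ) hφ1 hφn1 a
  have hφT : φ ∈ Tset A := ⟨hφ1, hφpos, hφtr⟩
  -- contradiction
  have hclose : ∀ᶠ i in (U : Filter I), ∀ x ∈ F, ‖φf i x - φ x‖ < ε := by
    rw [Filter.eventually_all_finset]
    intro x _
    have := (heval x)
    rw [Metric.tendsto_nhds] at this
    filter_upwards [this ε hε] with i hi
    rwa [dist_eq_norm] at hi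
  obtain ⟨i, hi⟩ := hclose.exists
  obtain ⟨x, hx, hgt⟩ := hbadf i φ hφT
  have : τf i ⟨x, i.2.1 (hF hx)⟩ = φf i x := (hφe i ⟨x, i.2.1 (hF hx)⟩).symm
  rw [this] at hgt
  exact absurd (hi x hx) (not_lt.mpr hgt.le)

/-- inclusion of star subalgebras as a continuous linear map -/
def inclCLM {C D : StarSubalgebra ℂ A} (h : C ≤ D) : C →L[ℂ] D where
  toLinearMap :=
    { toFun := fun x => ⟨x.1, h x.2⟩
      map_add' := fun _ _ => rfl
      map_smul' := fun _ _ => rfl }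
  cont := Continuous.subtype_mk continuous_subtype_val _

lemma inclCLM_apply {C D : StarSubalgebra ℂ A} (h : C ≤ D) (x : C) :
    (inclCLM h x : A) = (x : A) := rfl

/-- restriction of a functional -/
noncomputable def resF {C D : StarSubalgebra ℂ A} (h : C ≤ D) (τ : D →L[ℂ] ℂ) : C →L[ℂ] ℂ :=
  τ.comp (inclCLM h)

lemma resF_apply {C D : StarSubalgebra ℂ A} (h : C ≤ D) (τ : D →L[ℂ] ℂ) (x : A) (hx : x ∈ C) :
    resF h τ ⟨x, hx⟩ = τ ⟨x, h hx⟩ := rfl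

lemma resF_trace {C D : StarSubalgebra ℂ A} (h : C ≤ D) (τ : D →L[ℂ] ℂ)
    (hτ : IsTrStateOn D τ) : IsTrStateOn C (resF h τ) := by
  refine ⟨?_, ?_, ?_⟩
  · have : inclCLM h (1 : C) = (1 : D) := Subtype.ext rfl
    show τ (inclCLM h 1) = 1
    rw [this, hτ.1]
  · intro b
    have : inclCLM h (star b * b) = star (inclCLM h b) * (inclCLM h b) := Subtype.ext rfl
    show 0 ≤ τ (inclCLM h (star b * b))
    rw [this]
    exact hτ.2.1 _
  · intro b c
    have h1 : inclCLM h (b * c) = (inclCLM h b) * (inclCLM h c) := Subtype.ext rfl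
    have h2 : inclCLM h (c * b) = (inclCLM h c) * (inclCLM h b) := Subtype.ext rfl
    show τ (inclCLM h (b * c)) = τ (inclCLM h (c * b))
    rw [h1, h2, hτ.2.2]

/-- two continuous functions on a subalgebra agreeing on a dense subset agree -/
lemma ext_on_dense {C : StarSubalgebra ℂ A} {t : Set A} (ht : t ⊆ (C : Set A))
    (hd : (C : Set A) ⊆ closure t) {f g : C → ℂ} (hf : Continuous f) (hg : Continuous g)
    (h : ∀ x (hx : x ∈ t), f ⟨x, ht hx⟩ = g ⟨x, ht hx⟩) : ∀ y : C, f y = g y := by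
  have hdense : Dense (Subtype.val ⁻¹' t : Set C) := by
    intro y
    rw [closure_subtype]
    have himg : Subtype.val '' (Subtype.val ⁻¹' t : Set C) = t := by
      rw [Set.image_preimage_eq_inter_range]
      rw [Subtype.range_coe]
      exact Set.inter_eq_self_of_subset_left ht
    rw [himg]
    exact hd y.2
  have := Continuous.ext_on hdense hf hg (fun x hx => by
    have : f ⟨x.1, ht hx⟩ = g ⟨x.1, ht hx⟩ := h x.1 hx
    simpa using this)
  intro y; rw [this]

/-- Iterated one_step: every trace on C restricts on C₀ to a genuine trace of A. -/
lemma step (C₀ : StarSubalgebra ℂ A) (h₀c : IsClosed (C₀ : Set A))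
    (h₀s : IsSeparable (C₀ : Set A)) :
    ∃ C : StarSubalgebra ℂ A, ∃ hle : C₀ ≤ C, IsClosed (C : Set A) ∧ IsSeparable (C : Set A) ∧
      ∀ τ : C →L[ℂ] ℂ, IsTrStateOn C τ → ∃ σ ∈ Tset A,
        ∀ x (hx : x ∈ C₀), σ x = τ ⟨x, hle hx⟩ := by
  classical
  obtain ⟨t, hts, htc, htd⟩ := h₀s.exists_countable_dense_subset
  haveI : Countable ↥t := htc.to_subtype
  -- index
  set ι := List ↥t × ℕ with hι
  have hFsub : ∀ i : ι, (((i.1.map Subtype.val).toFinset : Finset A) : Set A) ⊆ (C₀ : Set A) := by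
    intro i x hx
    simp only [Finset.coe_image, List.coe_toFinset, List.mem_map, Set.mem_setOf_eq] at hx
    obtain ⟨y, _, rfl⟩ := hx
    exact hts y.2
  have hstep : ∀ i : ι, ∃ C : StarSubalgebra ℂ A, ∃ hle : C₀ ≤ C,
      IsClosed (C : Set A) ∧ IsSeparable (C : Set A) ∧
      ∀ τ : C →L[ℂ] ℂ, IsTrStateOn C τ → ∃ σ ∈ Tset A,
        ∀ x (hx : x ∈ (i.1.map Subtype.val).toFinset),
          ‖τ ⟨x, hle (hFsub i hx)⟩ - σ x‖ ≤ 1 / (i.2 + 1) :=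
    fun i => one_step C₀ h₀c h₀s _ (hFsub i) (by positivity)
  choose Cf hCfle hCfc hCfs hCfp using hstep
  -- the big algebra
  set C : StarSubalgebra ℂ A := genC ((C₀ : Set A) ∪ ⋃ i : ι, (Cf i : Set A)) with hC
  have hle : C₀ ≤ C := fun x hx => subset_genC _ (Set.mem_union_left _ hx)
  have hleCf : ∀ i : ι, Cf i ≤ C := fun i x hx =>
    subset_genC _ (Set.mem_union_right _ (Set.mem_iUnion.mpr ⟨i, hx⟩))
  refine ⟨C, hle, genC_isClosed _, genC_isSeparable (h₀s.union (.iUnion fun i => hCfs i)), ?_⟩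
  intro τ hτ
  -- closed sets for compactness
  set Z : ι → Set (WeakDual ℂ A) := fun i =>
    Tset A ∩ {σ | ∀ x (hx : x ∈ (i.1.map Subtype.val).toFinset),
      ‖τ ⟨x, hle (hFsub i hx)⟩ - σ x‖ ≤ 1 / (i.2 + 1)} with hZ
  have hZne : ∀ i, (Z i).Nonempty := by
    intro i
    obtain ⟨σ, hσT, hσ⟩ := hCfp i (resF (hleCf i) τ) (resF_trace _ τ hτ)
    refine ⟨σ, hσT, fun x hx => ?_⟩
    have := hσ x hx
    rwa [resF_apply] at this
  have hZcl : ∀ i, IsClosed (Z i) := by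
    intro i
    refine isClosed_Tset.inter ?_
    rw [Set.setOf_forall]
    refine isClosed_iInter fun x => ?_
    rw [Set.setOf_forall]
    refine isClosed_iInter fun hx => ?_
    have hc : Continuous fun σ : WeakDual ℂ A => ‖τ ⟨x, hle (hFsub i hx)⟩ - σ x‖ :=
      (continuous_const.sub (WeakDual.eval_continuous x)).norm
    exact isClosed_le hc continuous_const
  have hZcp : ∀ i, IsCompact (Z i) := fun i =>
    isCompact_Tset.of_isClosed_subset (hZcl i) Set.inter_subset_left
  have hZdir : Directed (· ⊇ ·) Z := by
    intro i j
    refine ⟨(i.1 ++ j.1, max i.2 j.2), ?_, ?_⟩ <;>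
    · rintro σ ⟨hσT, hσ⟩
      refine ⟨hσT, fun x hx => ?_⟩
      have hx' : x ∈ (((i.1 ++ j.1 : List ↥t).map Subtype.val).toFinset) := by
        rw [List.mem_toFinset] at hx ⊢
        rw [List.map_append, List.mem_append]
        first
          | exact Or.inl hx
          | exact Or.inr hx
      refine (hσ x hx').trans ?_
      have : (max i.2 j.2 : ℝ) + 1 ≥ (i.2 : ℝ) + 1 ∧ (max i.2 j.2 : ℝ) + 1 ≥ (j.2 : ℝ) + 1 := by
        constructor <;> simp [le_max_left, le_max_right]
      gcongr
      first
        | exact le_max_left _ _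
        | exact le_max_right _ _
  haveI : Nonempty ι := ⟨([], 0)⟩
  obtain ⟨σ, hσ⟩ := IsCompact.nonempty_iInter_of_directed_nonempty_isCompact_isClosed
    Z hZdir hZne hZcp hZcl
  have hσT : σ ∈ Tset A := (Set.mem_iInter.mp hσ ([], 0)).1
  refine ⟨σ, hσT, ?_⟩
  -- σ agrees with τ on t, hence on C₀
  have hagree : ∀ x (hx : x ∈ t), σ x = τ ⟨x, hle (hts hx)⟩ := by
    intro x hx
    have key : ∀ k : ℕ, ‖τ ⟨x, hle (hts hx)⟩ - σ x‖ ≤ 1 / (k + 1) := by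
      intro k
      have hmem := Set.mem_iInter.mp hσ ([⟨x, hx⟩], k)
      have hxF : x ∈ ((([⟨x, hx⟩] : List ↥t).map Subtype.val).toFinset) := by simp
      exact hmem.2 x hxF
    have h0 : ‖τ ⟨x, hle (hts hx)⟩ - σ x‖ ≤ 0 := by
      have := ge_of_tendsto' tendsto_one_div_add_atTop_nhds_zero_nat (fun k => key k)
      linarith [this]
    have := norm_le_zero_iff.mp h0
    rw [sub_eq_zero] at this
    exact this.symm
  -- extend by continuity
  intro x hx
  have hcf : Continuous fun y : C₀ => σ (y : A) :=
    (map_continuous σ).comp continuous_subtype_val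
  have hcg : Continuous fun y : C₀ => τ (inclCLM hle y) :=
    τ.continuous.comp (inclCLM hle).continuous
  have := ext_on_dense hts htd hcf hcg (fun y hy => hagree y hy) ⟨x, hx⟩
  exact this


end algebra

end auxiliary

/-- for every separable subset `X` of a unital C*-algebra `A` there is a
separable closed C*-subalgebra `B ⊇ X` such that every tracial state of `B` extends to a
tracial state of `A` (the restriction map `T(A) → T(B)` is surjective). -/
theorem stmt12 {A : Type*} [CStarAlgebra A] (X : Set A)
    (hX : TopologicalSpace.IsSeparable X) :
    ∃ B : StarSubalgebra ℂ A, IsClosed (B : Set A) ∧ X ⊆ (B : Set A) ∧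
      TopologicalSpace.IsSeparable (B : Set A) ∧
      ∀ τB : B →L[ℂ] ℂ,
        (τB 1 = 1 ∧ (∀ b : B, 0 ≤ τB (star b * b)) ∧
          ∀ b c : B, τB (b * c) = τB (c * b)) →
        ∃ τ : A →L[ℂ] ℂ, IsTracialState τ ∧ ∀ b : B, τB b = τ (b : A) := by
  classical
  -- the chain
  set P := {C : StarSubalgebra ℂ A // IsClosed (C : Set A) ∧ IsSeparable (C : Set A)} with hP
  have hnext : ∀ p : P, ∃ q : P, ∃ hle : p.1 ≤ q.1,
      ∀ τ : q.1 →L[ℂ] ℂ, IsTrStateOn q.1 τ → ∃ σ ∈ Tset A,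
        ∀ x (hx : x ∈ p.1), σ x = τ ⟨x, hle hx⟩ := by
    intro p
    obtain ⟨C, hle, hc, hs, hp⟩ := step p.1 p.2.1 p.2.2
    exact ⟨⟨C, hc, hs⟩, hle, hp⟩
  choose nxt nxtle nxtp using hnext
  set p0 : P := ⟨genC X, genC_isClosed X, genC_isSeparable hX⟩ with hp0
  set Bs : ℕ → P := fun n => Nat.rec p0 (fun _ p => nxt p) n with hBs
  have hBsucc : ∀ n, Bs (n + 1) = nxt (Bs n) := fun n => rfl
  have hmono : Monotone (fun n => (Bs n).1) := by
    apply monotone_nat_of_le_succ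
    intro n
    rw [hBsucc n]
    exact nxtle (Bs n)
  -- the union
  have hdir : Directed (· ≤ ·) (fun n => (Bs n).1.toSubalgebra) := fun m n =>
    ⟨max m n, hmono (le_max_left m n), hmono (le_max_right m n)⟩
  set Usub : Subalgebra ℂ A := ⨆ n, (Bs n).1.toSubalgebra with hUsub
  have hUcoe : (Usub : Set A) = ⋃ n, ((Bs n).1 : Set A) :=
    Subalgebra.coe_iSup_of_directed hdir
  have hUmem : ∀ x : A, x ∈ Usub ↔ ∃ n, x ∈ (Bs n).1 := by
    intro x
    rw [← SetLike.mem_coe, hUcoe]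
    simp
  set Ustar : StarSubalgebra ℂ A :=
    { Usub with
      star_mem' := by
        intro x hx
        rw [show ∀ y, y ∈ Usub.carrier ↔ y ∈ Usub from fun y => Iff.rfl] at hx ⊢
        rw [hUmem] at hx ⊢
        obtain ⟨n, hn⟩ := hx
        exact ⟨n, star_mem hn⟩ } with hUstar
  have hUstarcoe : (Ustar : Set A) = ⋃ n, ((Bs n).1 : Set A) := hUcoe
  set B : StarSubalgebra ℂ A := Ustar.topologicalClosure with hB
  have hBclosed : IsClosed (B : Set A) := StarSubalgebra.isClosed_topologicalClosure _
  have hBcoe : (B : Set A) = closure (Ustar : Set A) :=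
    StarSubalgebra.topologicalClosure_coe _
  have hBsep : IsSeparable (B : Set A) := by
    rw [hBcoe, hUstarcoe]
    exact (IsSeparable.iUnion fun n => (Bs n).2.2).closure
  have hBsle : ∀ n, (Bs n).1 ≤ B := fun n x hx =>
    StarSubalgebra.le_topologicalClosure _ (by
      rw [← SetLike.mem_coe, hUstarcoe]
      exact Set.mem_iUnion.mpr ⟨n, hx⟩)
  have hXB : X ⊆ (B : Set A) := fun x hx => hBsle 0 (subset_genC X hx)
  refine ⟨B, hBclosed, hXB, hBsep, ?_⟩
  intro τB hτB
  have hτB' : IsTrStateOn B τB := hτB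
  -- the nested traces
  have hEne : ∀ n : ℕ, ∃ σ ∈ Tset A, ∀ x (hx : x ∈ (Bs n).1), σ x = τB ⟨x, hBsle n hx⟩ := by
    intro n
    have hτn : IsTrStateOn (Bs (n+1)).1 (resF (hBsle (n+1)) τB) :=
      resF_trace _ _ hτB'
    obtain ⟨σ, hσT, hσ⟩ := nxtp (Bs n) (resF (hBsle (n+1)) τB) hτn
    exact ⟨σ, hσT, fun x hx => hσ x hx⟩
  set E : ℕ → Set (WeakDual ℂ A) := fun n =>
    Tset A ∩ {σ | ∀ x (hx : x ∈ (Bs n).1), σ x = τB ⟨x, hBsle n hx⟩} with hE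
  have hEne' : ∀ n, (E n).Nonempty := by
    intro n
    obtain ⟨σ, hσT, hσ⟩ := hEne n
    exact ⟨σ, hσT, hσ⟩
  have hEcl : ∀ n, IsClosed (E n) := by
    intro n
    refine isClosed_Tset.inter ?_
    rw [Set.setOf_forall]
    refine isClosed_iInter fun x => ?_
    rw [Set.setOf_forall]
    refine isClosed_iInter fun hx => ?_
    exact isClosed_eq (WeakDual.eval_continuous x) continuous_const
  have hEcp : ∀ n, IsCompact (E n) := fun n =>
    isCompact_Tset.of_isClosed_subset (hEcl n) Set.inter_subset_left
  have hEdir : Directed (· ⊇ ·) E := by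
    intro m n
    refine ⟨max m n, ?_, ?_⟩ <;>
    · rintro σ ⟨hσT, hσ⟩
      exact ⟨hσT, fun x hx => hσ x (hmono (by simp [le_max_left, le_max_right]) hx)⟩
  obtain ⟨σ, hσ⟩ := IsCompact.nonempty_iInter_of_directed_nonempty_isCompact_isClosed
    E hEdir hEne' hEcp hEcl
  have hσT : σ ∈ Tset A := (Set.mem_iInter.mp hσ 0).1
  -- agreement on the union, then on B
  have hUsub : (Ustar : Set A) ⊆ (B : Set A) := fun x hx =>
    StarSubalgebra.le_topologicalClosure _ hx
  have hUd : (B : Set A) ⊆ closure (Ustar : Set A) := by rw [hBcoe]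
  have hagree : ∀ x (hx : x ∈ (Ustar : Set A)), σ x = τB ⟨x, hUsub hx⟩ := by
    intro x hx
    rw [hUstarcoe] at hx
    obtain ⟨sn, ⟨n, rfl⟩, hn⟩ := hx
    exact (Set.mem_iInter.mp hσ n).2 x hn
  have hext : ∀ y : B, σ (y : A) = τB y := by
    have hcf : Continuous fun y : B => σ (y : A) :=
      (map_continuous σ).comp continuous_subtype_val
    exact ext_on_dense hUsub hUd hcf τB.continuous hagree
  refine ⟨WeakDual.toStrongDual σ, ⟨hσT.1, hσT.2.1, hσT.2.2⟩, ?_⟩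
  intro b
  exact (hext b).symm
end

section
/- Let A be a unital C*-algebra, S a metrizable Choquet simplex of tracial states, and τ, σ ∈ S with τ ≤ C σ for some C > 1. Let θ_σ: L∞(∂S, μ_σ) → Z(π_σ(A)'') and θ_τ be the *-isomorphisms satisfying σ(θ_σ(f)a) = ∫ f(λ)λ(a) dμ_σ(λ) (and similarly for τ), where μ_τ, μ_σ are the unique boundary representing measures. Then θ_σ(dμ_τ/dμ_σ · f) = (dτ/dσ) θ_τ(f) for every bounded Borel function f on ∂S; in particular θ_σ(dμ_τ/dμ_σ) = dτ/dσ. -/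
open scoped ComplexOrder ENNReal
open MeasureTheory

/-- let `τ ≤ C σ` be tracial states in a metrizable Choquet simplex `S`
of tracial states of `A`, with unique boundary representing measures `μτ ≤ C μσ` on the
extreme boundary `Ω = ∂S` (whose points `ω` are the extremal tracial states `ev ω`).
Let `N = π_σ(A)''` (encoded via the embedding `π : A → N`, normal tracial extensions
`σ', τ'` of `σ, τ` with `σ'` separating), let `θσ, θτ` be the maps from bounded Borel
functions on `∂S` into the center characterized by
`σ'(θσ(f) π(a)) = ∫ f(ω) (ev ω)(a) dμσ` (and likewise for `τ`), let `D = dτ/dσ` be the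
Radon–Nikodym derivative given by Sakai's theorem and `g = dμτ/dμσ`.  Then
`θσ(g · f) = D · θτ(f)` for every `f`; in particular `θσ(g) = D`. -/
theorem stmt15 {A N : Type*} [CStarAlgebra A] [CStarAlgebra N]
    {Ω : Type*} [MeasurableSpace Ω]
    (π : A →⋆ₐ[ℂ] N)
    (ev : Ω → (A →L[ℂ] ℂ)) (hev : ∀ ω, IsTracialState (ev ω))
    (μσ μτ : Measure Ω) [IsProbabilityMeasure μσ] [IsProbabilityMeasure μτ]
    (σ τ : A →L[ℂ] ℂ) (hσ : IsTracialState σ) (hτ : IsTracialState τ)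
    (C : ℝ) (hC : 1 < C)
    (hdom : ∀ a : A, (τ (star a * a)).re ≤ C * (σ (star a * a)).re)
    (hμdom : μτ ≤ (ENNReal.ofReal C) • μσ)
    (hrepσ : ∀ a : A, σ a = ∫ ω, ev ω a ∂μσ)
    (hrepτ : ∀ a : A, τ a = ∫ ω, ev ω a ∂μτ)
    (σ' τ' : N →L[ℂ] ℂ)
    (hσ'π : ∀ a : A, σ' (π a) = σ a) (hτ'π : ∀ a : A, τ' (π a) = τ a)
    (hσ'tr : ∀ x y : N, σ' (x * y) = σ' (y * x))
    (hτ'tr : ∀ x y : N, τ' (x * y) = τ' (y * x))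
    (hsep : ∀ x y : N, (∀ a : A, σ' (x * π a) = σ' (y * π a)) → x = y)
    (θσ θτ : (Ω → ℂ) → N)
    (hθσ : ∀ (f : Ω → ℂ) (a : A), σ' (θσ f * π a) = ∫ ω, f ω * ev ω a ∂μσ)
    (hθτ : ∀ (f : Ω → ℂ) (a : A), τ' (θτ f * π a) = ∫ ω, f ω * ev ω a ∂μτ)
    (hθτ1 : θτ (fun _ => 1) = 1)
    (D : N) (hD : ∀ x : N, τ' x = σ' (D * x))
    (g : Ω → ℂ)
    (hg : ∀ (f : Ω → ℂ) (a : A),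
      ∫ ω, f ω * ev ω a ∂μτ = ∫ ω, f ω * g ω * ev ω a ∂μσ) :
    (∀ f : Ω → ℂ, θσ (fun ω => g ω * f ω) = D * θτ f) ∧ θσ g = D := by
  have main : ∀ f : Ω → ℂ, θσ (fun ω => g ω * f ω) = D * θτ f := by
    intro f
    apply hsep
    intro a
    have h1 : σ' (θσ (fun ω => g ω * f ω) * π a) = ∫ ω, f ω * g ω * ev ω a ∂μσ := by
      rw [hθσ]
      congr 1
      ext ω
      ring
    rw [h1, ← hg f a, ← hθτ f a, hD, ← mul_assoc]
  refine ⟨main, ?_⟩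
  have := main (fun _ => 1)
  rw [hθτ1, mul_one] at this
  simpa using this
end

section
/- Let M be a continuous W*-bundle over K with expectation E: M → C(K), and suppose every fiber π_λ(M) is a factor. If (p_n) is a central sequence in M (i.e., ‖[p_n, a]‖_{2,u} → 0 for all a ∈ M) with 0 ≤ p_n ≤ 1, and if for every a ∈ M and ε > 0 there exist unitaries u_1, …, u_k ∈ M with ‖E(a) − (1/k) Σ u_i a u_i*‖_{2,u} < ε, then ‖E(p_n a) − E(p_n) E(a)‖ → 0 for every a ∈ M. -/
open scoped ComplexOrder

private lemma cs_symm {A : Type*} [Ring A] [StarRing A] [Algebra ℂ A] [StarModule ℂ A]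
    (φ : A →ₗ[ℂ] ℂ) (hφ : ∀ z : A, 0 ≤ φ (star z * z)) (x y : A) :
    (starRingEnd ℂ) (φ (star y * x)) = φ (star x * y) := by
  have him : ∀ z : A, (φ (star z * z)).im = 0 := by
    intro z
    have := (Complex.le_def.mp (hφ z)).2
    simpa using this.symm
  have exp : ∀ c : ℂ, φ (star (x + c • y) * (x + c • y))
      = φ (star x * x) + c * φ (star x * y) + (starRingEnd ℂ c) * φ (star y * x)
        + (c * (starRingEnd ℂ c)) * φ (star y * y) := by
    intro c
    have h : star (x + c • y) * (x + c • y)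
        = star x * x + c • (star x * y) + (starRingEnd ℂ c) • (star y * x)
          + (c * (starRingEnd ℂ c)) • (star y * y) := by
      simp only [star_add, star_smul, add_mul, mul_add, smul_mul_assoc, mul_smul_comm,
        smul_smul, smul_add, starRingEnd_apply]
      abel
    rw [h, map_add, map_add, map_add, map_smul, map_smul, map_smul, smul_eq_mul,
      smul_eq_mul, smul_eq_mul]
  have h1 := him (x + (1 : ℂ) • y)
  rw [exp 1] at h1
  have h2 := him (x + Complex.I • y)
  rw [exp Complex.I] at h2
  simp only [map_one, one_mul, Complex.add_im, Complex.mul_im, Complex.mul_re,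
    Complex.conj_I, Complex.I_re, Complex.I_im, Complex.neg_re, Complex.neg_im,
    him x, him y] at h1 h2
  apply Complex.ext
  · simp only [Complex.conj_re]; nlinarith [h2]
  · simp only [Complex.conj_im]; nlinarith [h1]

private lemma cs_aux {A : Type*} [Ring A] [StarRing A] [Algebra ℂ A] [StarModule ℂ A]
    (φ : A →ₗ[ℂ] ℂ) (hφ : ∀ z : A, 0 ≤ φ (star z * z)) (x y : A) :
    ‖φ (star x * y)‖ ^ 2 ≤ (φ (star x * x)).re * (φ (star y * y)).re := by
  letI core : PreInnerProductSpace.Core ℂ A :=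
    { inner := fun a b => φ (star a * b)
      conj_inner_symm := fun a b => by
        show (starRingEnd ℂ) (φ (star b * a)) = φ (star a * b)
        exact cs_symm φ hφ a b
      re_inner_nonneg := fun z => by
        show 0 ≤ (φ (star z * z)).re
        have := (Complex.le_def.mp (hφ z)).1
        simpa using this
      add_left := fun a b c => by
        show φ (star (a + b) * c) = φ (star a * c) + φ (star b * c)
        rw [star_add, add_mul, map_add]
      smul_left := fun a b r => by
        show φ (star (r • a) * b) = (starRingEnd ℂ) r * φ (star a * b)
        rw [star_smul, smul_mul_assoc, map_smul, smul_eq_mul, starRingEnd_apply] }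
  have key := @InnerProductSpace.Core.inner_mul_inner_self_le ℂ A _ _ _ core x y
  have hxy : (@inner ℂ A (InnerProductSpace.Core.toPreInner') x y : ℂ) = φ (star x * y) := rfl
  have hyx : (@inner ℂ A (InnerProductSpace.Core.toPreInner') y x : ℂ) = φ (star y * x) := rfl
  have hxx : (@inner ℂ A (InnerProductSpace.Core.toPreInner') x x : ℂ) = φ (star x * x) := rfl
  have hyy : (@inner ℂ A (InnerProductSpace.Core.toPreInner') y y : ℂ) = φ (star y * y) := rfl
  rw [hxy, hyx, hxx, hyy] at key
  have hnorm : ‖φ (star y * x)‖ = ‖φ (star x * y)‖ := by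
    rw [← cs_symm φ hφ x y, RCLike.norm_conj]
  rw [hnorm] at key
  calc ‖φ (star x * y)‖ ^ 2 = ‖φ (star x * y)‖ * ‖φ (star x * y)‖ := by ring
    _ ≤ (φ (star x * x)).re * (φ (star y * y)).re := key

set_option maxHeartbeats 1000000

/-- let `M` be a continuous W*-bundle over `K` with expectation
`E : M → C(K)` whose fibers `π_λ(M)` are factors (encoded: any element commuting with `M`
in the fiber 2-seminorm at `λ` is a scalar there).  If `(p n)` is a central sequence with
`0 ≤ p n ≤ 1` and the Dixmier-type averaging property holds (for every `a` and `ε > 0`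
there are unitaries with `‖E(a) − (1/k) ∑ uᵢ a uᵢ*‖_{2,u} < ε`), then
`‖E (p n · a) − E (p n) E (a)‖ → 0` for every `a ∈ M`. -/
theorem stmt18 {M K : Type*} [CStarAlgebra M] [PartialOrder M] [StarOrderedRing M]
    [TopologicalSpace K] [CompactSpace K] [TopologicalSpace.MetrizableSpace K]
    (ι : C(K, ℂ) →⋆ₐ[ℂ] M)
    (hι_central : ∀ (f : C(K, ℂ)) (a : M), ι f * a = a * ι f)
    (E : M →L[ℂ] C(K, ℂ))
    (hE1 : E 1 = 1)
    (hE_pos : ∀ x : M, 0 ≤ E (star x * x))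
    (hE_faithful : ∀ x : M, E (star x * x) = 0 → x = 0)
    (hE_tracial : ∀ x y : M, E (x * y) = E (y * x))
    (hE_module : ∀ (f : C(K, ℂ)) (x : M), E (ι f * x) = f * E x)
    (hE_expect : ∀ f : C(K, ℂ), E (ι f) = f)
    -- every fiber `π_λ(M)` is a factor:
    (h_factor : ∀ (lam : K) (z : M),
      (∀ a : M, (E (star (z * a - a * z) * (z * a - a * z)) lam) = 0) →
      ∃ c : ℂ, (E (star (z - c • 1) * (z - c • 1)) lam) = 0)
    (p : ℕ → M) (hp0 : ∀ n, 0 ≤ p n) (hp1 : ∀ n, p n ≤ 1)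
    (h_central : ∀ a : M,
      Filter.Tendsto
        (fun n => Real.sqrt ‖E (star (p n * a - a * p n) * (p n * a - a * p n))‖)
        Filter.atTop (nhds 0))
    (h_dixmier : ∀ a : M, ∀ ε > (0 : ℝ), ∃ k : ℕ, 0 < k ∧ ∃ u : Fin k → M,
      (∀ i, u i ∈ unitary M) ∧
      Real.sqrt ‖E (star (ι (E a) - (1 / (k : ℂ)) • ∑ i, u i * a * star (u i)) *
        (ι (E a) - (1 / (k : ℂ)) • ∑ i, u i * a * star (u i)))‖ < ε) :
    ∀ a : M,
      Filter.Tendsto (fun n => ‖E (p n * a) - E (p n) * E a‖) Filter.atTop (nhds 0) := by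
  classical
  -- positivity of E on nonnegative elements
  have Epos : ∀ z : M, 0 ≤ z → 0 ≤ E z := by
    intro z hz
    rw [StarOrderedRing.nonneg_iff] at hz
    induction hz using AddSubmonoid.closure_induction with
    | mem w hw => obtain ⟨s, rfl⟩ := hw; exact hE_pos s
    | zero => simp
    | add w v _ _ hw hv => rw [map_add]; exact add_nonneg hw hv
  -- evaluation functionals
  let φ : K → (M →ₗ[ℂ] ℂ) := fun lam =>
    { toFun := fun z => E z lam
      map_add' := fun w v => by simp
      map_smul' := fun c v => by simp }
  have hφpos : ∀ (lam : K) (z : M), 0 ≤ φ lam (star z * z) := by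
    intro lam z
    have := hE_pos z
    rw [ContinuousMap.le_def] at this
    exact this lam
  have hptle : ∀ (z : M) (lam : K), 0 ≤ (E (star z * z)) lam := fun z lam => hφpos lam z
  have hnorm_eq_re : ∀ v : ℂ, 0 ≤ v → ‖v‖ = v.re := by
    intro v hv
    obtain ⟨h1, h2⟩ := Complex.le_def.mp hv
    simp only [Complex.zero_re, Complex.zero_im] at h1 h2
    rw [show v = (v.re : ℂ) from Complex.ext rfl (by simp [← h2])]
    simp [abs_of_nonneg h1]
  -- uniform 2-norm bound by operator norm
  have hEnorm : ∀ z : M, ‖E (star z * z)‖ ≤ ‖z‖ ^ 2 := by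
    intro z
    have hle : star z * z ≤ algebraMap ℝ M (‖z‖ ^ 2) := by
      have := IsSelfAdjoint.le_algebraMap_norm_self (a := star z * z)
        (IsSelfAdjoint.star_mul_self z)
      rwa [CStarRing.norm_star_mul_self, ← sq] at this
    have h4 := Epos _ (sub_nonneg.mpr hle)
    rw [map_sub, sub_nonneg] at h4
    have h5 : E (algebraMap ℝ M (‖z‖ ^ 2)) = ((‖z‖ ^ 2 : ℝ) : ℂ) • (1 : C(K, ℂ)) := by
      rw [IsScalarTower.algebraMap_apply ℝ ℂ M, Algebra.algebraMap_eq_smul_one, map_smul, hE1,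
        Complex.coe_algebraMap]
    rw [h5] at h4
    refine (ContinuousMap.norm_le _ (sq_nonneg ‖z‖)).mpr fun lam => ?_
    rw [hnorm_eq_re _ (hptle z lam)]
    have := (ContinuousMap.le_def.mp h4) lam
    have h6 := (Complex.le_def.mp this).1
    simpa [← Complex.ofReal_pow] using h6
  have hsqrt : ∀ z : M, Real.sqrt ‖E (star z * z)‖ ≤ ‖z‖ := by
    intro z
    have := Real.sqrt_le_sqrt (hEnorm z)
    rwa [Real.sqrt_sq (norm_nonneg z)] at this
  -- Cauchy-Schwarz at the level of C(K)
  have hCS : ∀ x y : M,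
      ‖E (star x * y)‖ ≤ Real.sqrt ‖E (star x * x)‖ * Real.sqrt ‖E (star y * y)‖ := by
    intro x y
    refine (ContinuousMap.norm_le _
      (mul_nonneg (Real.sqrt_nonneg _) (Real.sqrt_nonneg _))).mpr fun lam => ?_
    have h1 := cs_aux (φ lam) (hφpos lam) x y
    have h2 : ((E (star x * x)) lam).re ≤ ‖E (star x * x)‖ := by
      calc ((E (star x * x)) lam).re ≤ ‖(E (star x * x)) lam‖ := by
            exact Complex.re_le_norm _
        _ ≤ ‖E (star x * x)‖ := ContinuousMap.norm_coe_le_norm _ lam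
    have h3 : ((E (star y * y)) lam).re ≤ ‖E (star y * y)‖ := by
      calc ((E (star y * y)) lam).re ≤ ‖(E (star y * y)) lam‖ := by
            exact Complex.re_le_norm _
        _ ≤ ‖E (star y * y)‖ := ContinuousMap.norm_coe_le_norm _ lam
    have h3' : 0 ≤ ((E (star y * y)) lam).re := by
      have := (Complex.le_def.mp (hptle y lam)).1; simpa using this
    calc ‖(E (star x * y)) lam‖ = Real.sqrt (‖(E (star x * y)) lam‖ ^ 2) :=
          (Real.sqrt_sq (norm_nonneg _)).symm
      _ ≤ Real.sqrt (((E (star x * x)) lam).re * ((E (star y * y)) lam).re) :=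
          Real.sqrt_le_sqrt h1
      _ ≤ Real.sqrt (‖E (star x * x)‖ * ‖E (star y * y)‖) :=
          Real.sqrt_le_sqrt (mul_le_mul h2 h3 h3' (norm_nonneg _))
      _ = Real.sqrt ‖E (star x * x)‖ * Real.sqrt ‖E (star y * y)‖ :=
          Real.sqrt_mul (norm_nonneg _) _
  intro a
  rw [Metric.tendsto_atTop]
  intro ε hε
  obtain ⟨k, hk, u, hu, hd⟩ := h_dixmier a (ε / 2) (by positivity)
  have hk0 : (k : ℂ) ≠ 0 := Nat.cast_ne_zero.mpr hk.ne'
  set avg : M := (1 / (k : ℂ)) • ∑ i, u i * a * star (u i) with havg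
  set d : M := ι (E a) - avg with hddef
  set δ : ℝ := ε / (2 * (‖a‖ + 1)) with hδdef
  have hδpos : 0 < δ := by positivity
  have hev : ∀ᶠ n in Filter.atTop, ∀ i : Fin k,
      Real.sqrt ‖E (star (p n * u i - u i * p n) * (p n * u i - u i * p n))‖ < δ := by
    rw [Filter.eventually_all]
    exact fun i => (h_central (u i)).eventually (gt_mem_nhds hδpos)
  obtain ⟨N, hN⟩ := Filter.eventually_atTop.mp hev
  refine ⟨N, fun n hn => ?_⟩
  have hp_sa : star (p n) = p n := IsSelfAdjoint.of_nonneg (hp0 n)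
  have e1 : E (p n) * E a = E (p n * ι (E a)) := by
    rw [hE_tracial (p n) (ι (E a)), hE_module, mul_comm]
  have e2 : p n * ι (E a) = p n * avg + p n * d := by
    rw [← mul_add]
    congr 1
    rw [hddef]
    abel
  have e3 : E (p n * avg) = (1 / (k : ℂ)) • ∑ i, E ((star (u i) * p n * u i) * a) := by
    rw [havg, mul_smul_comm, Finset.mul_sum, map_smul, map_sum]
    congr 1
    refine Finset.sum_congr rfl fun i _ => ?_
    rw [show p n * (u i * a * star (u i)) = (p n * u i * a) * star (u i) by
      simp [mul_assoc], hE_tracial]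
    congr 1
    simp [mul_assoc]
  have e4 : E (p n * a) = (1 / (k : ℂ)) • ∑ _i : Fin k, E (p n * a) := by
    rw [Finset.sum_const, Finset.card_univ, Fintype.card_fin, ← Nat.cast_smul_eq_nsmul ℂ,
      smul_smul, one_div, inv_mul_cancel₀ hk0, one_smul]
  have e5 : E (p n * a) - E (p n) * E a
      = (1 / (k : ℂ)) • ∑ i, (E (p n * a) - E ((star (u i) * p n * u i) * a))
        - E (p n * d) := by
    rw [e1, e2, map_add, sub_add_eq_sub_sub]
    congr 1
    rw [e3]
    nth_rewrite 1 [e4]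
    rw [← smul_sub, ← Finset.sum_sub_distrib]
  have hterm : ∀ i : Fin k,
      ‖E (p n * a) - E ((star (u i) * p n * u i) * a)‖ ≤ δ * ‖a‖ := by
    intro i
    have hui := Unitary.mem_iff.mp (hu i)
    set c : M := p n * u i - u i * p n with hc
    have h2 : star (u i) * c = star (u i) * p n * u i - p n := by
      rw [hc, mul_sub, ← mul_assoc, ← mul_assoc, hui.1, one_mul]
    have h2' : p n - star (u i) * p n * u i = -(star (u i) * c) := by rw [h2, neg_sub]
    have h3 : star (p n - star (u i) * p n * u i) * (p n - star (u i) * p n * u i)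
        = star c * c := by
      rw [h2', star_neg, neg_mul_neg, star_mul, star_star, mul_assoc,
        ← mul_assoc (u i) (star (u i)) c, hui.2, one_mul]
    have hsa : star (p n - star (u i) * p n * u i) = p n - star (u i) * p n * u i := by
      simp [star_sub, star_mul, star_star, hp_sa, mul_assoc]
    have h4 : E (p n * a) - E ((star (u i) * p n * u i) * a)
        = E (star (p n - star (u i) * p n * u i) * a) := by
      rw [hsa, sub_mul, map_sub]
    rw [h4]
    have h5 := hCS (p n - star (u i) * p n * u i) a
    rw [h3] at h5
    have h6 := hN n hn i
    calc ‖E (star (p n - star (u i) * p n * u i) * a)‖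
        ≤ Real.sqrt ‖E (star c * c)‖ * Real.sqrt ‖E (star a * a)‖ := h5
      _ ≤ δ * ‖a‖ := mul_le_mul h6.le (hsqrt a) (Real.sqrt_nonneg _) hδpos.le
  have hpart1 : ‖(1 / (k : ℂ)) • ∑ i, (E (p n * a) - E ((star (u i) * p n * u i) * a))‖
      ≤ ε / 2 := by
    rw [norm_smul]
    have hnk : ‖(1 / (k : ℂ))‖ = 1 / (k : ℝ) := by simp
    rw [hnk]
    have hsum : ‖∑ i, (E (p n * a) - E ((star (u i) * p n * u i) * a))‖
        ≤ (k : ℝ) * (δ * ‖a‖) := by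
      calc ‖∑ i, (E (p n * a) - E ((star (u i) * p n * u i) * a))‖
          ≤ ∑ i, ‖E (p n * a) - E ((star (u i) * p n * u i) * a)‖ := norm_sum_le _ _
        _ ≤ ∑ _i : Fin k, δ * ‖a‖ := Finset.sum_le_sum fun i _ => hterm i
        _ = (k : ℝ) * (δ * ‖a‖) := by simp [Finset.sum_const, nsmul_eq_mul]
    have hkR : (0 : ℝ) < (k : ℝ) := by exact_mod_cast hk
    calc (1 / (k : ℝ)) * ‖∑ i, (E (p n * a) - E ((star (u i) * p n * u i) * a))‖
        ≤ (1 / (k : ℝ)) * ((k : ℝ) * (δ * ‖a‖)) :=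
          mul_le_mul_of_nonneg_left hsum (by positivity)
      _ = δ * ‖a‖ := by field_simp
      _ ≤ ε / 2 := by
          rw [hδdef, div_mul_eq_mul_div, div_le_div_iff₀ (by positivity) two_pos]
          nlinarith [norm_nonneg a, hε.le]
  have hpart2 : ‖E (p n * d)‖ < ε / 2 := by
    rw [show p n * d = star (p n) * d by rw [hp_sa]]
    calc ‖E (star (p n) * d)‖
        ≤ Real.sqrt ‖E (star (p n) * p n)‖ * Real.sqrt ‖E (star d * d)‖ := hCS (p n) d
      _ ≤ 1 * Real.sqrt ‖E (star d * d)‖ := by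
          refine mul_le_mul_of_nonneg_right ?_ (Real.sqrt_nonneg _)
          calc Real.sqrt ‖E (star (p n) * p n)‖ ≤ ‖p n‖ := hsqrt (p n)
            _ ≤ 1 := (CStarAlgebra.norm_le_one_iff_of_nonneg (p n) (hp0 n)).mpr (hp1 n)
      _ = Real.sqrt ‖E (star d * d)‖ := one_mul _
      _ < ε / 2 := hd
  rw [dist_zero_right, Real.norm_eq_abs, abs_of_nonneg (norm_nonneg _)]
  calc ‖E (p n * a) - E (p n) * E a‖
      = ‖(1 / (k : ℂ)) • ∑ i, (E (p n * a) - E ((star (u i) * p n * u i) * a))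
          - E (p n * d)‖ := by rw [e5]
    _ ≤ ‖(1 / (k : ℂ)) • ∑ i, (E (p n * a) - E ((star (u i) * p n * u i) * a))‖
          + ‖E (p n * d)‖ := norm_sub_le _ _
    _ < ε / 2 + ε / 2 := add_lt_add_of_le_of_lt hpart1 hpart2
    _ = ε := by ring
end
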